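/- arXiv:2002.00767 — 10 statements merged into one kernel-verified Lean document; each statement's English description precedes it below -/
import Mathlib

section
/- If {E_I : ∅ ≠ I ⊆ {1,...,d}} is a collection of independent random variables with E_I ~ Geo(1−p_I) (i.e. P(E_I > n) = p_Iⁿ), p_I ∈ [0,1], and τ_k := min{E_I : k ∈ I} for k = 1,...,d, then P(τ₁ > n₁, ..., τ_d > n_d) = ∏_{∅ ≠ I ⊆ {1,...,d}} p_I^{max_{i∈I} n_i} for all n₁,...,n_d ∈ ℕ₀. -/
open MeasureTheory ProbabilityTheory

/-- Survival function of the narrow-sense multivariate geometric distribution built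
from independent geometric shocks `E_I ~ Geo(1 - p_I)`, one for every nonempty
subset `I` of `{1,…,d}`, via `τ_k = min {E_I : k ∈ I}`. -/
theorem narrow_sense_geometric_survival
    {Ω : Type*} [MeasurableSpace Ω] (μ : Measure Ω) [IsProbabilityMeasure μ]
    (d : ℕ) (hd : 0 < d)
    (E : Finset (Fin d) → Ω → ℕ) (p : Finset (Fin d) → ℝ)
    (hp : ∀ I : Finset (Fin d), I.Nonempty → 0 ≤ p I ∧ p I ≤ 1)
    (hpfin : ∀ k : Fin d,
      ∏ I ∈ Finset.univ.filter (fun I : Finset (Fin d) => k ∈ I), p I < 1)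
    (hmeas : ∀ I : Finset (Fin d), Measurable (E I))
    (hindep : iIndepFun (m := fun _ : {I : Finset (Fin d) // I.Nonempty} =>
      (inferInstance : MeasurableSpace ℕ)) (fun I => E I.1) μ)
    (hsurv : ∀ I : Finset (Fin d), I.Nonempty →
      ∀ n : ℕ, μ {ω | n < E I ω} = ENNReal.ofReal (p I ^ n))
    (τ : Fin d → Ω → ℕ)
    (hτ : ∀ (k : Fin d) (ω : Ω), τ k ω =
      (Finset.univ.filter (fun I : Finset (Fin d) => k ∈ I)).inf'
        ⟨{k}, by simp⟩ (fun I => E I ω)) :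
    ∀ n : Fin d → ℕ,
      μ {ω | ∀ k : Fin d, n k < τ k ω} =
        ENNReal.ofReal
          (∏ I ∈ Finset.univ.filter (fun I : Finset (Fin d) => I.Nonempty),
            p I ^ (I.sup n)) := by
  classical
  intro n
  have hset : {ω | ∀ k : Fin d, n k < τ k ω}
      = ⋂ i : {I : Finset (Fin d) // I.Nonempty},
          (E i.1) ⁻¹' (Set.Ioi (i.1.sup n)) := by
    ext ω
    simp only [Set.mem_setOf_eq, Set.mem_iInter, Set.mem_preimage, Set.mem_Ioi]
    constructor
    · rintro h ⟨I, hI⟩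
      rw [← Finset.sup'_eq_sup hI, Finset.sup'_lt_iff]
      intro k hk
      have hk' := h k
      rw [hτ] at hk'
      exact hk'.trans_le (Finset.inf'_le _ (by simp [hk]))
    · intro h k
      rw [hτ]
      refine (Finset.lt_inf'_iff _).mpr ?_
      intro I hI
      simp only [Finset.mem_filter] at hI
      have hIne : I.Nonempty := ⟨k, hI.2⟩
      exact (Finset.le_sup (f := n) hI.2).trans_lt (h ⟨I, hIne⟩)
  rw [hset]
  rw [hindep.meas_iInter (s := fun i => (E i.1) ⁻¹' (Set.Ioi (i.1.sup n)))
    (fun i => ⟨Set.Ioi (i.1.sup n), measurableSet_Ioi, rfl⟩)]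
  have hsurv' : ∀ i : {I : Finset (Fin d) // I.Nonempty},
      μ ((fun I : {I : Finset (Fin d) // I.Nonempty} => E I.1) i ⁻¹'
        (Set.Ioi (i.1.sup n))) = ENNReal.ofReal (p i.1 ^ (i.1.sup n)) := by
    intro i
    have := hsurv i.1 i.2 (i.1.sup n)
    convert this using 2
    rfl
  calc ∏ i : {I : Finset (Fin d) // I.Nonempty},
        μ ((fun I : {I : Finset (Fin d) // I.Nonempty} => E I.1) i ⁻¹'
          (Set.Ioi (i.1.sup n)))
      = ∏ i : {I : Finset (Fin d) // I.Nonempty},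
          ENNReal.ofReal (p i.1 ^ (i.1.sup n)) := by
        exact Finset.prod_congr rfl (fun i _ => hsurv' i)
    _ = ENNReal.ofReal (∏ i : {I : Finset (Fin d) // I.Nonempty},
          p i.1 ^ (i.1.sup n)) := by
        rw [← ENNReal.ofReal_prod_of_nonneg]
        intro i _
        exact pow_nonneg (hp i.1 i.2).1 _
    _ = ENNReal.ofReal
          (∏ I ∈ Finset.univ.filter (fun I : Finset (Fin d) => I.Nonempty),
            p I ^ (I.sup n)) := by
        congr 1
        exact (Finset.prod_subtype _ (by simp) (fun I => p I ^ (I.sup n))).symm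
end

section
/- The narrow-sense multivariate geometric survival function F̄(n₁,...,n_d) = ∏_{∅≠I⊆{1,...,d}} p_I^{max_{i∈I} n_i} satisfies the local discrete multivariate lack-of-memory property: for every k ∈ {1,...,d}, indices 1 ≤ i₁ < ... < i_k ≤ d, and m, n_{i₁},...,n_{i_k} ∈ ℕ₀, one has F̄ evaluated at the vector with entries n_{i_j}+m at positions i_j and 0 elsewhere equals F̄ at (m,...,m at positions i_j, 0 elsewhere) times F̄ at (n_{i_j} at positions i_j, 0 elsewhere); equivalently P(τ_{i₁} > n_{i₁}+m, ..., τ_{i_k} > n_{i_k}+m) = P(τ_{i₁} > m,...,τ_{i_k} > m)·P(τ_{i₁} > n_{i₁},...,τ_{i_k} > n_{i_k}). -/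
lemma sup_ite_eq_inter_sup {d : ℕ} (I s : Finset (Fin d)) (g : Fin d → ℕ) :
    I.sup (fun i => if i ∈ s then g i else 0) = (I ∩ s).sup g := by
  apply le_antisymm
  · apply Finset.sup_le
    intro i hi
    by_cases h : i ∈ s
    · simpa [h] using Finset.le_sup (Finset.mem_inter.mpr ⟨hi, h⟩)
    · simp [h]
  · apply Finset.sup_le
    intro i hi
    rcases Finset.mem_inter.mp hi with ⟨h1, h2⟩
    simpa [h2] using Finset.le_sup (f := fun i => if i ∈ s then g i else 0) h1

/-- The narrow-sense multivariate geometric survival function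
`F̄(n₁,…,n_d) = ∏_{∅≠I⊆{1,…,d}} p_I ^ (max_{i∈I} n_i)` satisfies the local discrete
multivariate lack-of-memory property. -/
theorem narrow_sense_geometric_local_LM
    (d : ℕ) (p : Finset (Fin d) → ℝ)
    (hp : ∀ I : Finset (Fin d), I.Nonempty → 0 ≤ p I ∧ p I ≤ 1)
    (hpfin : ∀ k : Fin d,
      ∏ I ∈ Finset.univ.filter (fun I : Finset (Fin d) => k ∈ I), p I < 1)
    (F : (Fin d → ℕ) → ℝ)
    (hF : ∀ n : Fin d → ℕ,
      F n = ∏ I ∈ Finset.univ.filter (fun I : Finset (Fin d) => I.Nonempty),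
        p I ^ (I.sup n))
    (s : Finset (Fin d)) (hs : s.Nonempty) (m : ℕ) (n : Fin d → ℕ) :
    F (fun i => if i ∈ s then n i + m else 0) =
      F (fun i => if i ∈ s then m else 0) * F (fun i => if i ∈ s then n i else 0) := by
  simp only [hF]
  rw [← Finset.prod_mul_distrib]
  apply Finset.prod_congr rfl
  intro I _
  rw [← pow_add]
  congr 1
  rw [sup_ite_eq_inter_sup, sup_ite_eq_inter_sup, sup_ite_eq_inter_sup]
  set J := I ∩ s with hJ
  rcases J.eq_empty_or_nonempty with h | h
  · simp [h]
  · rw [Finset.sup_const h m]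
    obtain ⟨b, hb, hbe⟩ := Finset.exists_mem_eq_sup J h n
    apply le_antisymm
    · apply Finset.sup_le
      intro i hi
      exact add_le_add (Finset.le_sup hi) le_rfl |>.trans (by omega)
    · rw [hbe]
      simpa [Nat.add_comm] using Finset.le_sup (f := fun i => n i + m) hb
end

section
/- A d-dimensional discrete survival function on ℕ^d satisfies the local discrete lack-of-memory property if and only if it is the survival function of a d-variate wide-sense geometric distribution, i.e., it has the form F̄(n₁,...,n_d) = ∏_{k=1}^d ( Σ_{I ⊆ {1,...,d}, π(i) ∉ I ∀ i ≥ k} p̃_I )^{n_{(k)} − n_{(k−1)}}, where π sorts the arguments increasingly, n_{(1)} ≤ ... ≤ n_{(d)} are the order statistics, n_{(0)} := 0, and the p̃_I ∈ [0,1] satisfy Σ_I p̃_I = 1 and Σ_{I: k∉I} p̃_I < 1 for all k. -/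
open MeasureTheory

open Finset

section Aux

variable {Ω : Type*} [MeasurableSpace Ω]

lemma bridge_prod {c L : ℕ → ℝ} (a : ℕ → ℕ) (d B : ℕ)
    (ha0 : a 0 = 0) (hmono : Monotone a) (haB : a d ≤ B)
    (hc : ∀ k, k < d → ∀ v, a k < v → v ≤ a (k+1) → L v = c k)
    (h1 : ∀ v, a d < v → L v = 1) :
    ∏ v ∈ range B, L (v+1) = ∏ k ∈ range d, c k ^ (a (k+1) - a k) := by
  have key : ∀ k, k ≤ d → ∏ v ∈ range (a k), L (v+1) = ∏ j ∈ range k, c j ^ (a (j+1) - a j) := by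
    intro k
    induction k with
    | zero => intro _; simp [ha0]
    | succ k ih =>
      intro hk
      have hk' : k ≤ d := Nat.le_of_succ_le hk
      have h1' : a k ≤ a (k+1) := hmono (Nat.le_succ k)
      rw [range_eq_Ico, ← Finset.prod_Ico_consecutive _ (Nat.zero_le (a k)) h1',
        ← range_eq_Ico, ih hk', prod_range_succ]
      congr 1
      have : ∀ v ∈ Finset.Ico (a k) (a (k+1)), L (v+1) = c k := by
        intro v hv
        rw [Finset.mem_Ico] at hv
        exact hc k (Nat.lt_of_succ_le hk) (v+1) (by omega) (by omega)
      rw [Finset.prod_congr rfl this, Finset.prod_const, Nat.card_Ico]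
  rw [range_eq_Ico, ← Finset.prod_Ico_consecutive _ (Nat.zero_le (a d)) haB,
    ← range_eq_Ico, key d le_rfl]
  have : ∀ v ∈ Finset.Ico (a d) B, L (v+1) = 1 := fun v hv => by
    rw [Finset.mem_Ico] at hv; exact h1 (v+1) (by omega)
  rw [Finset.prod_congr rfl this, Finset.prod_const_one, mul_one]

lemma formula_eq_layers {d : ℕ} (hd : 0 < d) (p : Finset (Fin d) → ℝ)
    (hp1 : ∑ I : Finset (Fin d), p I = 1)
    (n : Fin d → ℕ) (π : Equiv.Perm (Fin d)) (hmono : Monotone (fun i => n (π i)))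
    (B : ℕ) (hB : ∀ j, n j ≤ B) :
    (∏ k : Fin d,
        (∑ I ∈ Finset.univ.filter
            (fun I : Finset (Fin d) => ∀ i : Fin d, k ≤ i → π i ∉ I), p I) ^
          (n (π k) - (if k.val = 0 then 0 else
            n (π ⟨k.val - 1, Nat.lt_of_le_of_lt (Nat.sub_le _ _) k.isLt⟩))))
      = ∏ v ∈ range B,
          ∑ I ∈ Finset.univ.filter
            (fun I : Finset (Fin d) => ∀ j, v + 1 ≤ n j → j ∉ I), p I := by
  classical
  obtain ⟨a, ha⟩ : ∃ a : ℕ → ℕ, a = fun k => if k = 0 then 0 else n (π ⟨min (k-1) (d-1), by omega⟩) := ⟨_, rfl⟩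
  have aval : ∀ k, 0 < k → k ≤ d → ∀ (h : k - 1 < d), a k = n (π ⟨k-1, h⟩) := by
    intro k hk hkd h
    simp only [ha]
    rw [if_neg (by omega)]
    have : (⟨min (k-1) (d-1), by omega⟩ : Fin d) = ⟨k-1, h⟩ := Fin.ext (by simp; omega)
    rw [this]
  obtain ⟨c, hcdef⟩ : ∃ c : ℕ → ℝ, c = fun k => if hk : k < d then
      ∑ I ∈ Finset.univ.filter
        (fun I : Finset (Fin d) => ∀ i : Fin d, (⟨k, hk⟩ : Fin d) ≤ i → π i ∉ I), p I
    else 1 := ⟨_, rfl⟩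
  obtain ⟨L, hLdef⟩ : ∃ L : ℕ → ℝ, L = fun v =>
      ∑ I ∈ Finset.univ.filter (fun I : Finset (Fin d) => ∀ j, v ≤ n j → j ∉ I), p I := ⟨_, rfl⟩
  have ha0 : a 0 = 0 := by simp [ha]
  have hamono : Monotone a := by
    intro x y hxy
    simp only [ha]
    by_cases hx : x = 0
    · simp [hx]
    · have hy : y ≠ 0 := by omega
      simp only [hx, hy, if_neg, if_false]
      exact hmono (by simp [Fin.le_def]; omega)
  have had : a d = n (π ⟨d-1, by omega⟩) := aval d hd le_rfl (by omega)
  have hamax : ∀ j, n j ≤ a d := by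
    intro j
    rw [had]
    have : n (π (π.symm j)) ≤ n (π ⟨d-1, by omega⟩) := hmono (by
      simp [Fin.le_def]
      omega)
    simpa using this
  have haB : a d ≤ B := by rw [had]; exact hB _
  have hc : ∀ k, k < d → ∀ v, a k < v → v ≤ a (k+1) → L v = c k := by
    intro k hk v hv1 hv2
    have hak1 : a (k+1) = n (π ⟨k, hk⟩) := aval (k+1) (by omega) (by omega) (by omega)
    simp only [hLdef, hcdef, dif_pos hk]
    refine Finset.sum_congr ?_ (fun _ _ => rfl)
    ext I
    simp only [mem_filter, mem_univ, true_and]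
    constructor
    · intro hI i hki
      refine hI (π i) ?_
      have : n (π ⟨k, hk⟩) ≤ n (π i) := hmono hki
      omega
    · intro hI j hj
      have hji : π (π.symm j) = j := π.apply_symm_apply j
      by_cases hki : (⟨k, hk⟩ : Fin d) ≤ π.symm j
      · rw [← hji]; exact hI _ hki
      · exfalso
        have hk0 : k ≠ 0 := by
          intro h0
          exact hki (by simp [Fin.le_def, h0])
        have hlt : (π.symm j : Fin d) ≤ ⟨k-1, by omega⟩ := by
          simp only [Fin.le_def] at hki ⊢
          omega
        have h5 := hmono hlt
        simp only [Equiv.apply_symm_apply] at h5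
        have hak : a k = n (π ⟨k-1, by omega⟩) := aval k (by omega) (by omega) (by omega)
        rw [hak] at hv1
        exact absurd (le_trans hj h5) (by omega)
  have h1 : ∀ v, a d < v → L v = 1 := by
    intro v hv
    simp only [hLdef]
    have hft : Finset.filter (fun I : Finset (Fin d) => ∀ j, v ≤ n j → j ∉ I) univ = univ := by
      apply Finset.filter_true_of_mem
      intro I _ j hj
      exact absurd hj (by have := hamax j; omega)
    rw [hft, ← hp1]
  have hgoalR : ∏ v ∈ range B,
          ∑ I ∈ Finset.univ.filter
            (fun I : Finset (Fin d) => ∀ j, v + 1 ≤ n j → j ∉ I), p I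
      = ∏ v ∈ range B, L (v+1) := by
    simp only [hLdef]
  rw [hgoalR, bridge_prod a d B ha0 hamono haB hc h1,
    ← Fin.prod_univ_eq_prod_range (fun k => c k ^ (a (k+1) - a k)) d]
  refine Finset.prod_congr rfl (fun k _ => ?_)
  have hck : c k.val = ∑ I ∈ Finset.univ.filter
      (fun I : Finset (Fin d) => ∀ i : Fin d, k ≤ i → π i ∉ I), p I := by
    simp only [hcdef, dif_pos k.isLt]
  have hak1 : a (k.val + 1) = n (π k) := by
    rw [aval (k.val+1) (by omega) k.isLt (by omega)]
    congr 1
  have hak : a k.val = if k.val = 0 then 0 else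
      n (π ⟨k.val - 1, Nat.lt_of_le_of_lt (Nat.sub_le _ _) k.isLt⟩) := by
    by_cases h0 : k.val = 0
    · simp [h0, ha]
    · rw [if_neg h0, aval k.val (by omega) (by omega) (by omega)]
  rw [hck, hak1, hak]

lemma partition_sum (μ : Measure Ω)
    {d : ℕ} (τ : Fin d → Ω → ℕ) (hmeas : ∀ k, Measurable (τ k))
    (hτ1 : ∀ k ω, 1 ≤ τ k ω) (P : Fin d → Prop) [DecidablePred P] :
    ∑ I ∈ univ.filter (fun I : Finset (Fin d) => ∀ j, P j → j ∉ I),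
      μ {ω | ∀ i, i ∈ I ↔ τ i ω = 1} = μ {ω | ∀ j, P j → 1 < τ j ω} := by
  set E : Finset (Fin d) → Set Ω := fun I => {ω | ∀ i, i ∈ I ↔ τ i ω = 1} with hE
  have hEmeas : ∀ I, MeasurableSet (E I) := by
    intro I
    have : E I = ⋂ i, {ω | i ∈ I ↔ τ i ω = 1} := by ext ω; simp [hE, Set.mem_iInter]
    rw [this]
    refine MeasurableSet.iInter fun i => ?_
    by_cases hi : i ∈ I
    · have : {ω | i ∈ I ↔ τ i ω = 1} = τ i ⁻¹' {1} := by ext ω; simp [hi]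
      rw [this]; exact (hmeas i) (measurableSet_singleton 1)
    · have : {ω | i ∈ I ↔ τ i ω = 1} = (τ i ⁻¹' {1})ᶜ := by ext ω; simp [hi]
      rw [this]; exact ((hmeas i) (measurableSet_singleton 1)).compl
  have hdisj : (↑(univ.filter (fun I : Finset (Fin d) => ∀ j, P j → j ∉ I)) : Set (Finset (Fin d))).PairwiseDisjoint E := by
    intro I _ J _ hIJ
    refine Set.disjoint_left.2 fun ω hI hJ => hIJ ?_
    ext i
    exact (hI i).trans (hJ i).symm
  rw [← measure_biUnion_finset hdisj (fun I _ => hEmeas I)]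
  congr 1
  ext ω
  simp only [Set.mem_iUnion, mem_filter, mem_univ, true_and, Set.mem_setOf_eq]
  constructor
  · rintro ⟨I, hIP, hIω⟩ j hPj
    have := (hIω j)
    have hj1 := hτ1 j ω
    have : τ j ω ≠ 1 := fun h => hIP j hPj (this.2 h)
    omega
  · intro hω
    refine ⟨univ.filter (fun i => τ i ω = 1), ?_, ?_⟩
    · intro j hPj
      simp only [mem_filter, mem_univ, true_and]
      have := hω j hPj; omega
    · intro i; simp [hE]

lemma layer_formula (μ : Measure Ω) [IsProbabilityMeasure μ]
    {d : ℕ} (τ : Fin d → Ω → ℕ) (hτ1 : ∀ k ω, 1 ≤ τ k ω)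
    (h : ∀ s : Finset (Fin d), s.Nonempty → ∀ (m : ℕ) (n : Fin d → ℕ),
        μ {ω | ∀ i ∈ s, n i + m < τ i ω} =
          μ {ω | ∀ i ∈ s, m < τ i ω} * μ {ω | ∀ i ∈ s, n i < τ i ω}) :
    ∀ (B : ℕ) (n : Fin d → ℕ), (∀ j, n j ≤ B) →
      (μ {ω | ∀ j, n j < τ j ω}).toReal
        = ∏ v ∈ range B, (μ {ω | ∀ j, v + 1 ≤ n j → 1 < τ j ω}).toReal := by
  intro B
  induction B with
  | zero =>
    intro n hn
    have : {ω : Ω | ∀ j, n j < τ j ω} = Set.univ :=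
      Set.eq_univ_of_forall fun ω j => by have := hτ1 j ω; have := hn j; omega
    simp [this]
  | succ B ih =>
    intro n hn
    by_cases hs : (univ.filter fun j => 1 ≤ n j).Nonempty
    · set s := univ.filter fun j : Fin d => 1 ≤ n j with hsdef
      have hmem : ∀ j, j ∈ s ↔ 1 ≤ n j := by intro j; simp [hsdef]
      have key := h s hs 1 (fun j => n j - 1)
      have eA : {ω : Ω | ∀ i ∈ s, n i - 1 + 1 < τ i ω} = {ω | ∀ j, n j < τ j ω} := by
        ext ω
        simp only [Set.mem_setOf_eq]
        constructor
        · intro hω j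
          by_cases hj : j ∈ s
          · have := hω j hj; have := (hmem j).1 hj; omega
          · have : ¬ 1 ≤ n j := fun hc => hj ((hmem j).2 hc)
            have := hτ1 j ω; omega
        · intro hω i hi
          have := hω i; have := (hmem i).1 hi; omega
      have eC : {ω : Ω | ∀ i ∈ s, n i - 1 < τ i ω} = {ω | ∀ j, n j - 1 < τ j ω} := by
        ext ω
        simp only [Set.mem_setOf_eq]
        constructor
        · intro hω j
          by_cases hj : j ∈ s
          · exact hω j hj
          · have : ¬ 1 ≤ n j := fun hc => hj ((hmem j).2 hc)
            have := hτ1 j ω; omega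
        · intro hω i _; exact hω i
      have eB : {ω : Ω | ∀ i ∈ s, 1 < τ i ω} = {ω | ∀ j, 0 + 1 ≤ n j → 1 < τ j ω} := by
        ext ω
        simp only [Set.mem_setOf_eq, zero_add]
        constructor
        · intro hω j hj; exact hω j ((hmem j).2 hj)
        · intro hω i hi; exact hω i ((hmem i).1 hi)
      rw [eA, eC, eB] at key
      rw [key, ENNReal.toReal_mul]
      have ihc := ih (fun j => n j - 1) (fun j => by show n j - 1 ≤ B; have := hn j; omega)
      have efac : ∀ v, {ω : Ω | ∀ j, v + 1 ≤ n j - 1 → 1 < τ j ω}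
          = {ω | ∀ j, v + 1 + 1 ≤ n j → 1 < τ j ω} := by
        intro v; ext ω
        simp only [Set.mem_setOf_eq]
        constructor
        · intro hω j hj; exact hω j (by omega)
        · intro hω j hj; exact hω j (by omega)
      rw [Finset.prod_congr rfl (fun v _ => by rw [efac v])] at ihc
      rw [ihc, Finset.prod_range_succ']
      ring
    · have hzero : ∀ j, n j = 0 := by
        intro j
        by_contra hc
        exact hs ⟨j, by simp [Nat.one_le_iff_ne_zero, hc]⟩
      have e1 : {ω : Ω | ∀ j, n j < τ j ω} = Set.univ :=
        Set.eq_univ_of_forall fun ω j => by rw [hzero j]; exact hτ1 j ω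
      have e2 : ∀ v, {ω : Ω | ∀ j, v + 1 ≤ n j → 1 < τ j ω} = Set.univ := by
        intro v
        refine Set.eq_univ_of_forall fun ω j hj => ?_
        rw [hzero j] at hj; omega
      simp only [e1, e2]
      simp

lemma strict_aux (μ : Measure Ω) [IsProbabilityMeasure μ]
    {d : ℕ} (τ : Fin d → Ω → ℕ) (hmeas : ∀ k, Measurable (τ k)) (hτ1 : ∀ k ω, 1 ≤ τ k ω)
    (h : ∀ s : Finset (Fin d), s.Nonempty → ∀ (m : ℕ) (n : Fin d → ℕ),
        μ {ω | ∀ i ∈ s, n i + m < τ i ω} =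
          μ {ω | ∀ i ∈ s, m < τ i ω} * μ {ω | ∀ i ∈ s, n i < τ i ω})
    (k : Fin d) : (μ {ω | 1 < τ k ω}).toReal < 1 := by
  classical
  rcases lt_or_ge (μ {ω | 1 < τ k ω}).toReal 1 with hlt | hge
  · exact hlt
  exfalso
  have hle : (μ {ω | 1 < τ k ω}).toReal ≤ 1 := by
    have := prob_le_one (μ := μ) (s := {ω | 1 < τ k ω})
    exact ENNReal.toReal_le_of_le_ofReal one_pos.le (by simpa using this)
  have hq1 : (μ {ω | 1 < τ k ω}).toReal = 1 := le_antisymm hle hge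
  have geo : ∀ N : ℕ, (μ {ω | N < τ k ω}).toReal = 1 := by
    intro N
    have hlay := layer_formula μ τ hτ1 h N (fun j => if j = k then N else 0)
      (fun j => by split <;> omega)
    have e1 : {ω : Ω | ∀ j, (if j = k then N else 0) < τ j ω} = {ω | N < τ k ω} := by
      ext ω
      simp only [Set.mem_setOf_eq]
      constructor
      · intro hω
        have := hω k; simpa using this
      · intro hω j
        by_cases hj : j = k
        · subst hj; simpa using hω
        · simp only [if_neg hj]; exact hτ1 j ω
    have e2 : ∀ v ∈ range N,
        (μ {ω | ∀ j, v + 1 ≤ (if j = k then N else 0) → 1 < τ j ω}).toReal = 1 := by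
      intro v hv
      rw [mem_range] at hv
      have : {ω : Ω | ∀ j, v + 1 ≤ (if j = k then N else 0) → 1 < τ j ω} = {ω | 1 < τ k ω} := by
        ext ω
        simp only [Set.mem_setOf_eq]
        constructor
        · intro hω
          exact hω k (by simp; omega)
        · intro hω j hj
          by_cases hjk : j = k
          · subst hjk; exact hω
          · simp [hjk] at hj
      rw [this, hq1]
    have hfix : {ω : Ω | ∀ j, (fun j => if j = k then N else 0) j < τ j ω} = {ω | N < τ k ω} := e1
    rw [hfix] at hlay
    rw [hlay]
    exact Finset.prod_eq_one e2
  have hμ : ∀ N : ℕ, μ {ω | N < τ k ω} = 1 := by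
    intro N
    have hg := geo N
    rwa [ENNReal.toReal_eq_one_iff] at hg
  have hms : ∀ N : ℕ, MeasurableSet {ω : Ω | N < τ k ω} := by
    intro N
    exact hmeas k (measurableSet_Ioi (a := N))
  have hcompl : ∀ N : ℕ, μ ({ω : Ω | N < τ k ω}ᶜ) = 0 := by
    intro N
    rw [measure_compl (hms N) (measure_ne_top μ _), hμ N, measure_univ, tsub_self]
  have hun : μ (⋃ N : ℕ, {ω : Ω | N < τ k ω}ᶜ) = 0 := measure_iUnion_null hcompl
  have huniv : (⋃ N : ℕ, {ω : Ω | N < τ k ω}ᶜ) = Set.univ := by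
    ext ω
    simp only [Set.mem_iUnion, Set.mem_compl_iff, Set.mem_setOf_eq, Set.mem_univ, iff_true]
    exact ⟨τ k ω, by omega⟩
  rw [huniv, measure_univ] at hun
  exact one_ne_zero hun

end Aux


/-- A discrete survival function on `ℕ^d` (values in `{1,2,…}`) satisfies the local
discrete lack-of-memory property if and only if it is the survival function of a
`d`-variate wide-sense geometric distribution. -/
theorem wide_sense_geometric_characterization
    {Ω : Type*} [MeasurableSpace Ω] (μ : Measure Ω) [IsProbabilityMeasure μ]
    (d : ℕ) (hd : 0 < d)
    (τ : Fin d → Ω → ℕ) (hmeas : ∀ k, Measurable (τ k))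
    (hτ1 : ∀ (k : Fin d) (ω : Ω), 1 ≤ τ k ω) :
    (∀ s : Finset (Fin d), s.Nonempty → ∀ (m : ℕ) (n : Fin d → ℕ),
        μ {ω | ∀ i ∈ s, n i + m < τ i ω} =
          μ {ω | ∀ i ∈ s, m < τ i ω} * μ {ω | ∀ i ∈ s, n i < τ i ω})
    ↔
    (∃ p : Finset (Fin d) → ℝ,
        (∀ I : Finset (Fin d), 0 ≤ p I ∧ p I ≤ 1) ∧
        (∑ I : Finset (Fin d), p I = 1) ∧
        (∀ k : Fin d,
          ∑ I ∈ Finset.univ.filter (fun I : Finset (Fin d) => k ∉ I), p I < 1) ∧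
        ∀ (n : Fin d → ℕ) (π : Equiv.Perm (Fin d)), Monotone (fun i => n (π i)) →
          (μ {ω | ∀ k : Fin d, n k < τ k ω}).toReal =
            ∏ k : Fin d,
              (∑ I ∈ Finset.univ.filter
                  (fun I : Finset (Fin d) => ∀ i : Fin d, k ≤ i → π i ∉ I), p I) ^
                (n (π k) - (if k.val = 0 then 0 else
                  n (π ⟨k.val - 1, Nat.lt_of_le_of_lt (Nat.sub_le _ _) k.isLt⟩)))) := by
  classical
  constructor
  · -- forward direction
    intro h
    refine ⟨fun I => (μ {ω | ∀ i, i ∈ I ↔ τ i ω = 1}).toReal, ?_, ?_, ?_, ?_⟩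
    · intro I
      refine ⟨ENNReal.toReal_nonneg, ?_⟩
      exact ENNReal.toReal_le_of_le_ofReal one_pos.le (by simpa using prob_le_one (μ := μ) (s := {ω | ∀ i, i ∈ I ↔ τ i ω = 1}))
    · -- sum to one
      have hps := partition_sum μ τ hmeas hτ1 (fun _ => False)
      have hflt : Finset.filter (fun I : Finset (Fin d) => ∀ j : Fin d, False → j ∉ I) univ = univ :=
        Finset.filter_true_of_mem (fun I _ j hj => hj.elim)
      have hset : {ω : Ω | ∀ j : Fin d, False → 1 < τ j ω} = Set.univ :=
        Set.eq_univ_of_forall (fun ω j hj => hj.elim)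
      rw [hflt, hset, measure_univ] at hps
      calc ∑ I : Finset (Fin d), (μ {ω | ∀ i, i ∈ I ↔ τ i ω = 1}).toReal
          = (∑ I : Finset (Fin d), μ {ω | ∀ i, i ∈ I ↔ τ i ω = 1}).toReal :=
            (ENNReal.toReal_sum (fun I _ => measure_ne_top μ _)).symm
        _ = 1 := by rw [hps]; simp
    · -- strictly less than one
      intro k
      have hps := partition_sum μ τ hmeas hτ1 (fun j => j = k)
      have hflt : Finset.filter (fun I : Finset (Fin d) => ∀ j : Fin d, j = k → j ∉ I) univ
          = Finset.filter (fun I : Finset (Fin d) => k ∉ I) univ := by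
        ext I; simp [mem_filter]
      have hset : {ω : Ω | ∀ j : Fin d, j = k → 1 < τ j ω} = {ω | 1 < τ k ω} := by
        ext ω; simp
      rw [hflt, hset] at hps
      have heq : ∑ I ∈ Finset.univ.filter (fun I : Finset (Fin d) => k ∉ I),
            (μ {ω | ∀ i, i ∈ I ↔ τ i ω = 1}).toReal
          = (μ {ω | 1 < τ k ω}).toReal := by
        rw [← hps]
        exact (ENNReal.toReal_sum (fun I _ => measure_ne_top μ _)).symm
      rw [heq]
      exact strict_aux μ τ hmeas hτ1 h k
    · -- the product formula
      intro n π hmono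
      have hB : ∀ j, n j ≤ ∑ j, n j := fun j =>
        Finset.single_le_sum (fun i _ => Nat.zero_le _) (mem_univ j)
      have hsum1 : ∑ I : Finset (Fin d), (μ {ω | ∀ i, i ∈ I ↔ τ i ω = 1}).toReal = 1 := by
        have hps := partition_sum μ τ hmeas hτ1 (fun _ => False)
        have hflt : Finset.filter (fun I : Finset (Fin d) => ∀ j : Fin d, False → j ∉ I) univ = univ :=
          Finset.filter_true_of_mem (fun I _ j hj => hj.elim)
        have hset : {ω : Ω | ∀ j : Fin d, False → 1 < τ j ω} = Set.univ :=
          Set.eq_univ_of_forall (fun ω j hj => hj.elim)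
        rw [hflt, hset, measure_univ] at hps
        calc ∑ I : Finset (Fin d), (μ {ω | ∀ i, i ∈ I ↔ τ i ω = 1}).toReal
            = (∑ I : Finset (Fin d), μ {ω | ∀ i, i ∈ I ↔ τ i ω = 1}).toReal :=
              (ENNReal.toReal_sum (fun I _ => measure_ne_top μ _)).symm
          _ = 1 := by rw [hps]; simp
      rw [layer_formula μ τ hτ1 h (∑ j, n j) n hB,
        formula_eq_layers hd _ hsum1 n π hmono (∑ j, n j) hB]
      refine Finset.prod_congr rfl (fun v _ => ?_)
      have hps := partition_sum μ τ hmeas hτ1 (fun j => v + 1 ≤ n j)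
      calc (μ {ω | ∀ j, v + 1 ≤ n j → 1 < τ j ω}).toReal
          = (∑ I ∈ Finset.univ.filter
              (fun I : Finset (Fin d) => ∀ j, v + 1 ≤ n j → j ∉ I),
                μ {ω | ∀ i, i ∈ I ↔ τ i ω = 1}).toReal := by
            rw [hps]
        _ = ∑ I ∈ Finset.univ.filter
              (fun I : Finset (Fin d) => ∀ j, v + 1 ≤ n j → j ∉ I),
                (μ {ω | ∀ i, i ∈ I ↔ τ i ω = 1}).toReal :=
            ENNReal.toReal_sum (fun I _ => measure_ne_top μ _)
  · -- reverse direction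
    rintro ⟨p, hp01, hp1, hplt, hform⟩ s hs m n
    have key : ∀ (f : Fin d → ℕ) (B : ℕ), (∀ j, f j ≤ B) →
        (μ {ω | ∀ k : Fin d, f k < τ k ω}).toReal
          = ∏ v ∈ range B, ∑ I ∈ Finset.univ.filter
              (fun I : Finset (Fin d) => ∀ j, v + 1 ≤ f j → j ∉ I), p I := by
      intro f B hB
      have hmon : Monotone (fun i => f (Tuple.sort f i)) := Tuple.monotone_sort f
      rw [hform f (Tuple.sort f) hmon, formula_eq_layers hd p hp1 f (Tuple.sort f) hmon B hB]
    set B := ∑ j, n j with hBdef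
    have hB : ∀ j, n j ≤ B := fun j =>
      Finset.single_le_sum (fun i _ => Nat.zero_le _) (mem_univ j)
    set N1 : Fin d → ℕ := fun j => if j ∈ s then n j + m else 0 with hN1
    set N2 : Fin d → ℕ := fun j => if j ∈ s then m else 0 with hN2
    set N3 : Fin d → ℕ := fun j => if j ∈ s then n j else 0 with hN3
    have e1 : {ω : Ω | ∀ i ∈ s, n i + m < τ i ω} = {ω | ∀ k : Fin d, N1 k < τ k ω} := by
      ext ω
      simp only [Set.mem_setOf_eq, hN1]
      constructor
      · intro hω j
        by_cases hj : j ∈ s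
        · rw [if_pos hj]; exact hω j hj
        · rw [if_neg hj]; exact lt_of_lt_of_le Nat.zero_lt_one (hτ1 j ω)
      · intro hω i hi
        have := hω i; rwa [if_pos hi] at this
    have e2 : {ω : Ω | ∀ i ∈ s, m < τ i ω} = {ω | ∀ k : Fin d, N2 k < τ k ω} := by
      ext ω
      simp only [Set.mem_setOf_eq, hN2]
      constructor
      · intro hω j
        by_cases hj : j ∈ s
        · rw [if_pos hj]; exact hω j hj
        · rw [if_neg hj]; exact lt_of_lt_of_le Nat.zero_lt_one (hτ1 j ω)
      · intro hω i hi
        have := hω i; rwa [if_pos hi] at this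
    have e3 : {ω : Ω | ∀ i ∈ s, n i < τ i ω} = {ω | ∀ k : Fin d, N3 k < τ k ω} := by
      ext ω
      simp only [Set.mem_setOf_eq, hN3]
      constructor
      · intro hω j
        by_cases hj : j ∈ s
        · rw [if_pos hj]; exact hω j hj
        · rw [if_neg hj]; exact lt_of_lt_of_le Nat.zero_lt_one (hτ1 j ω)
      · intro hω i hi
        have := hω i; rwa [if_pos hi] at this
    obtain ⟨cS, hcS⟩ : ∃ cS : ℝ, cS = ∑ I ∈ Finset.univ.filter
        (fun I : Finset (Fin d) => ∀ j, j ∈ s → j ∉ I), p I := ⟨_, rfl⟩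
    have hx2 : (μ {ω : Ω | ∀ i ∈ s, m < τ i ω}).toReal = cS ^ m := by
      rw [e2, key N2 m (fun j => by simp only [hN2]; split <;> omega)]
      have hcongr : ∀ v ∈ range m,
          (∑ I ∈ Finset.univ.filter
            (fun I : Finset (Fin d) => ∀ j, v + 1 ≤ N2 j → j ∉ I), p I) = cS := by
        intro v hv
        rw [mem_range] at hv
        rw [hcS]
        refine Finset.sum_congr ?_ (fun _ _ => rfl)
        ext I
        simp only [mem_filter, mem_univ, true_and, hN2]
        constructor
        · intro hI j hj
          exact hI j (by rw [if_pos hj]; omega)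
        · intro hI j hj
          refine hI j ?_
          by_contra hjs
          rw [if_neg hjs] at hj; omega
      rw [Finset.prod_congr rfl hcongr, Finset.prod_const, card_range]
    have hx3 : (μ {ω : Ω | ∀ i ∈ s, n i < τ i ω}).toReal
        = ∏ v ∈ range B, ∑ I ∈ Finset.univ.filter
            (fun I : Finset (Fin d) => ∀ j, v + 1 ≤ N3 j → j ∉ I), p I := by
      rw [e3, key N3 B (fun j => by have := hB j; simp only [hN3]; split <;> omega)]
    have hx1 : (μ {ω : Ω | ∀ i ∈ s, n i + m < τ i ω}).toReal
        = cS ^ m * ∏ v ∈ range B, ∑ I ∈ Finset.univ.filter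
            (fun I : Finset (Fin d) => ∀ j, v + 1 ≤ N3 j → j ∉ I), p I := by
      rw [e1, key N1 (m + B) (fun j => by have := hB j; simp only [hN1]; split <;> omega)]
      rw [Finset.prod_range_add]
      congr 1
      · -- first block
        have hcongr : ∀ v ∈ range m,
            (∑ I ∈ Finset.univ.filter
              (fun I : Finset (Fin d) => ∀ j, v + 1 ≤ N1 j → j ∉ I), p I) = cS := by
          intro v hv
          rw [mem_range] at hv
          rw [hcS]
          refine Finset.sum_congr ?_ (fun _ _ => rfl)
          ext I
          simp only [mem_filter, mem_univ, true_and, hN1]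
          constructor
          · intro hI j hj
            exact hI j (by rw [if_pos hj]; omega)
          · intro hI j hj
            refine hI j ?_
            by_contra hjs
            rw [if_neg hjs] at hj; omega
        rw [Finset.prod_congr rfl hcongr, Finset.prod_const, card_range]
      · -- second block
        refine Finset.prod_congr rfl (fun w _ => ?_)
        refine Finset.sum_congr ?_ (fun _ _ => rfl)
        ext I
        simp only [mem_filter, mem_univ, true_and, hN1, hN3]
        constructor
        · intro hI j hj
          refine hI j ?_
          by_cases hjs : j ∈ s
          · rw [if_pos hjs]; rw [if_pos hjs] at hj; omega
          · rw [if_neg hjs] at hj; omega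
        · intro hI j hj
          refine hI j ?_
          by_cases hjs : j ∈ s
          · rw [if_pos hjs] at hj ⊢; omega
          · rw [if_neg hjs] at hj; omega
    have hfin := hx1.trans (by rw [← hx2, ← hx3])
    have hmul : (μ {ω : Ω | ∀ i ∈ s, n i + m < τ i ω}).toReal
        = ((μ {ω : Ω | ∀ i ∈ s, m < τ i ω}) * (μ {ω : Ω | ∀ i ∈ s, n i < τ i ω})).toReal := by
      rw [ENNReal.toReal_mul]
      rw [hx1, hx2, hx3]
    exact (ENNReal.toReal_eq_toReal_iff' (measure_ne_top μ _)
      (ENNReal.mul_ne_top (measure_ne_top μ _) (measure_ne_top μ _))).1 hmul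
end

section
/- For a finite real sequence (x₀, ..., x_{d−1}), the d-monotonicity conditions ∇ʲx_k := Σ_{i=0}^{j} (−1)ⁱ C(j,i) x_{k+i} ≥ 0 for all k = 0,...,d−1 and j = 0,...,d−1−k are equivalent to the conditions ∇^{d−1−k} x_k ≥ 0 for k = 0,...,d−1. -/
private def D (x : ℕ → ℝ) (j k : ℕ) : ℝ :=
  ∑ i ∈ Finset.range (j + 1), (-1 : ℝ) ^ i * (Nat.choose j i : ℝ) * x (k + i)

private lemma D_succ (x : ℕ → ℝ) (j k : ℕ) :
    D x (j + 1) k = D x j k - D x j (k + 1) := by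
  have e1 : D x j k = ∑ i ∈ Finset.range (j + 2),
      (-1 : ℝ) ^ i * (Nat.choose j i : ℝ) * x (k + i) := by
    rw [show j + 2 = (j + 1) + 1 by rfl, Finset.sum_range_succ]
    simp [D, Nat.choose_eq_zero_of_lt (by omega : j < j + 1)]
  have e2 : D x j (k + 1) = ∑ i ∈ Finset.range (j + 2),
      (if i = 0 then 0 else (-1 : ℝ) ^ (i - 1) * (Nat.choose j (i - 1) : ℝ) * x (k + i)) := by
    rw [show j + 2 = (j + 1) + 1 by rfl, Finset.sum_range_succ']
    simp [D]
    apply Finset.sum_congr rfl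
    intro i _
    rw [show k + 1 + i = k + (i + 1) by omega]
  rw [e1, e2, D, ← Finset.sum_sub_distrib]
  apply Finset.sum_congr rfl
  intro i _
  rcases Nat.eq_zero_or_pos i with h | h
  · subst h; simp
  · obtain ⟨m, rfl⟩ : ∃ m, i = m + 1 := ⟨i - 1, by omega⟩
    simp only [Nat.choose_succ_succ, Nat.add_sub_cancel, if_neg (Nat.succ_ne_zero m)]
    push_cast
    ring

/-- For a finite real sequence `(x₀, …, x_{d-1})`, the full set of `d`-monotonicity
conditions `∇ʲ x_k ≥ 0` (for `k + j ≤ d - 1`) is equivalent to the conditions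
`∇^{d-1-k} x_k ≥ 0` for `k = 0, …, d-1`. -/
theorem d_monotone_iff_top_differences
    (d : ℕ) (hd : 1 ≤ d) (x : ℕ → ℝ) :
    (∀ k j : ℕ, k + j + 1 ≤ d →
        0 ≤ ∑ i ∈ Finset.range (j + 1),
          (-1 : ℝ) ^ i * (Nat.choose j i : ℝ) * x (k + i))
    ↔
    (∀ k : ℕ, k < d →
        0 ≤ ∑ i ∈ Finset.range (d - 1 - k + 1),
          (-1 : ℝ) ^ i * (Nat.choose (d - 1 - k) i : ℝ) * x (k + i)) := by
  constructor
  · intro h k hk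
    exact h k (d - 1 - k) (by omega)
  · intro h
    have key : ∀ m k j : ℕ, k + j + 1 ≤ d → d - 1 - (k + j) = m → 0 ≤ D x j k := by
      intro m
      induction m with
      | zero =>
        intro k j hkj hm
        have : j = d - 1 - k := by omega
        subst this
        exact h k (by omega)
      | succ n ih =>
        intro k j hkj hm
        have h1 : 0 ≤ D x (j + 1) k := ih k (j + 1) (by omega) (by omega)
        have h2 : 0 ≤ D x j (k + 1) := ih (k + 1) j (by omega) (by omega)
        have := D_succ x j k
        linarith
    intro k j hkj
    exact key (d - 1 - (k + j)) k j hkj rfl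
end

section
/- Every completely log-monotone sequence is completely monotone: if {x_k}_{k∈ℕ₀} is a sequence of strictly positive reals with x₀ = 1 such that ∇ʲ(ln x_k) ≥ 0 for all k ∈ ℕ₀ and j ∈ ℕ, then ∇ʲ x_k ≥ 0 for all j, k ∈ ℕ₀. -/
open Finset Nat fwdDiff

/-- Backward difference operator `(Dop u) k = u k - u (k+1)`. -/
private def Dop (u : ℕ → ℝ) : ℕ → ℝ := fun k => u k - u (k + 1)

private lemma Dop_eq (u : ℕ → ℝ) : Dop u = (-1 : ℝ) • fwdDiff 1 u := by
  funext k
  simp only [Dop, Pi.smul_apply, fwdDiff, smul_eq_mul]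
  ring

private lemma Dop_iter_eq (j : ℕ) : ∀ u : ℕ → ℝ,
    Dop^[j] u = ((-1 : ℝ) ^ j) • (fwdDiff 1)^[j] u := by
  induction j with
  | zero => intro u; simp
  | succ j ih =>
    intro u
    rw [Function.iterate_succ_apply, Dop_eq, ih, fwdDiff_iter_const_smul, smul_smul,
      ← Function.iterate_succ_apply, pow_succ]

private lemma Dop_iter_sum (u : ℕ → ℝ) (j k : ℕ) :
    Dop^[j] u k = ∑ i ∈ range (j + 1),
      (-1 : ℝ) ^ i * (Nat.choose j i : ℝ) * u (k + i) := by
  rw [Dop_iter_eq]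
  simp only [Pi.smul_apply, smul_eq_mul]
  rw [fwdDiff_iter_eq_sum_shift, Finset.mul_sum]
  refine Finset.sum_congr rfl fun i hi => ?_
  have hij : i ≤ j := by
    simp only [Finset.mem_range] at hi; omega
  have h1 : ((-1 : ℤ) ^ (j - i) * (j.choose i : ℤ)) • u (k + i • 1)
      = (-1 : ℝ) ^ (j - i) * (j.choose i : ℝ) * u (k + i) := by
    rw [zsmul_eq_mul]
    push_cast
    norm_num
  rw [h1, ← mul_assoc]
  have hsign : (-1 : ℝ) ^ j * (-1 : ℝ) ^ (j - i) = (-1 : ℝ) ^ i := by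
    rw [← pow_add]
    have h2 : j + (j - i) = 2 * (j - i) + i := by omega
    rw [h2, pow_add, pow_mul]
    simp
  rw [← hsign]; ring

private lemma Dop_iter_add (u v : ℕ → ℝ) (j : ℕ) :
    Dop^[j] (u + v) = Dop^[j] u + Dop^[j] v := by
  simp only [Dop_iter_eq, fwdDiff_iter_add, smul_add]

private lemma Dop_iter_smul (a : ℝ) (u : ℕ → ℝ) (j : ℕ) :
    Dop^[j] (a • u) = a • Dop^[j] u := by
  simp only [Dop_iter_eq, fwdDiff_iter_const_smul]
  rw [smul_comm]

private lemma Dop_iter_zero (j : ℕ) : Dop^[j] (fun _ => (0 : ℝ)) = fun _ => 0 := by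
  induction j with
  | zero => simp
  | succ j ih =>
    rw [Function.iterate_succ_apply]
    have h : Dop (fun _ => (0 : ℝ)) = fun _ => 0 := by funext k; simp [Dop]
    rw [h, ih]

private lemma Dop_iter_const (c : ℝ) (j : ℕ) (hj : 1 ≤ j) :
    Dop^[j] (fun _ => c) = fun _ => 0 := by
  obtain ⟨j, rfl⟩ : ∃ j', j = j' + 1 := ⟨j - 1, by omega⟩
  rw [Function.iterate_succ_apply]
  have h : Dop (fun _ => c) = fun _ => 0 := by funext k; simp [Dop]
  rw [h, Dop_iter_zero]

/-- Completely monotone on the window `[0, N]`. -/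
private def CMle (N : ℕ) (u : ℕ → ℝ) : Prop :=
  ∀ j k : ℕ, k + j ≤ N → 0 ≤ Dop^[j] u k

private lemma Dop_shift (u : ℕ → ℝ) :
    Dop (fun m => u (m + 1)) = fun m => Dop u (m + 1) := rfl

private lemma Dop_iter_shift (j : ℕ) : ∀ u : ℕ → ℝ,
    Dop^[j] (fun m => u (m + 1)) = fun m => Dop^[j] u (m + 1) := by
  induction j with
  | zero => intro u; simp
  | succ j ih =>
    intro u
    simp only [Function.iterate_succ_apply]
    rw [Dop_shift, ih (Dop u)]

private lemma CMle_mul_aux : ∀ j : ℕ, ∀ (N : ℕ) (u v : ℕ → ℝ),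
    CMle N u → CMle N v → ∀ k, k + j ≤ N → 0 ≤ Dop^[j] (u * v) k := by
  intro j
  induction j with
  | zero =>
    intro N u v hu hv k hk
    simpa using mul_nonneg (hu 0 k (by omega)) (hv 0 k (by omega))
  | succ j ih =>
    intro N u v hu hv k hk
    obtain ⟨N', rfl⟩ : ∃ N', N = N' + 1 := ⟨N - 1, by omega⟩
    rw [Function.iterate_succ_apply]
    have hD : Dop (u * v) = (u * Dop v) + (Dop u * fun m => v (m + 1)) := by
      funext m
      simp only [Dop, Pi.add_apply, Pi.mul_apply]
      ring
    rw [hD, Dop_iter_add, Pi.add_apply]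
    have hu' : CMle N' u := fun j' k' h => hu j' k' (by omega)
    have hDv : CMle N' (Dop v) := by
      intro j' k' h
      rw [← Function.iterate_succ_apply]
      exact hv (j' + 1) k' (by omega)
    have hDu : CMle N' (Dop u) := by
      intro j' k' h
      rw [← Function.iterate_succ_apply]
      exact hu (j' + 1) k' (by omega)
    have hvs : CMle N' (fun m => v (m + 1)) := by
      intro j' k' h
      rw [Dop_iter_shift]
      exact hv j' (k' + 1) (by omega)
    have h1 := ih N' u (Dop v) hu' hDv k (by omega)
    have h2 := ih N' (Dop u) (fun m => v (m + 1)) hDu hvs k (by omega)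
    linarith

private lemma CMle.mul {N : ℕ} {u v : ℕ → ℝ} (hu : CMle N u) (hv : CMle N v) :
    CMle N (u * v) := fun j k hk => CMle_mul_aux j N u v hu hv k hk

private lemma CMle_one (N : ℕ) : CMle N (fun _ => (1 : ℝ)) := by
  intro j k _
  rcases Nat.eq_zero_or_pos j with rfl | hj
  · simp
  · rw [Dop_iter_const _ _ hj]

private lemma CMle.pow {N : ℕ} {u : ℕ → ℝ} (hu : CMle N u) (n : ℕ) :
    CMle N (u ^ n) := by
  induction n with
  | zero =>
    have h : (u ^ 0 : ℕ → ℝ) = fun _ => (1 : ℝ) := by funext k; simp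
    rw [h]; exact CMle_one N
  | succ n ih =>
    have h : u ^ (n + 1) = u ^ n * u := by ring
    rw [h]; exact ih.mul hu

private lemma CMle.exp {N : ℕ} {w : ℕ → ℝ} (hw : CMle N w) :
    CMle N (fun m => Real.exp (w m)) := by
  intro j k hk
  rw [Dop_iter_sum]
  have hexp : ∀ m, Real.exp (w m) = ∑' n : ℕ, w m ^ n / n ! := by
    intro m
    rw [Real.exp_eq_exp_ℝ, NormedSpace.exp_eq_tsum_div]
  have hsummable : ∀ i : ℕ, Summable
      (fun n : ℕ => (-1 : ℝ) ^ i * (Nat.choose j i : ℝ) * (w (k + i) ^ n / n !)) :=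
    fun i => (Real.summable_pow_div_factorial (w (k + i))).mul_left _
  calc (0 : ℝ) ≤ ∑' n : ℕ, ∑ i ∈ range (j + 1),
        (-1 : ℝ) ^ i * (Nat.choose j i : ℝ) * (w (k + i) ^ n / n !) := by
        refine tsum_nonneg fun n => ?_
        have h : ∑ i ∈ range (j + 1),
            (-1 : ℝ) ^ i * (Nat.choose j i : ℝ) * (w (k + i) ^ n / n !)
            = (Dop^[j] (w ^ n) k) / n ! := by
          rw [Dop_iter_sum, Finset.sum_div]
          refine Finset.sum_congr rfl fun i _ => ?_
          simp only [Pi.pow_apply]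
          ring
        rw [h]
        exact div_nonneg (hw.pow n j k hk) (by positivity)
    _ = ∑ i ∈ range (j + 1), ∑' n : ℕ,
        (-1 : ℝ) ^ i * (Nat.choose j i : ℝ) * (w (k + i) ^ n / n !) := by
        rw [Summable.tsum_finsetSum (fun i _ => hsummable i)]
    _ = ∑ i ∈ range (j + 1),
        (-1 : ℝ) ^ i * (Nat.choose j i : ℝ) * Real.exp (w (k + i)) := by
        refine Finset.sum_congr rfl fun i _ => ?_
        rw [hexp, tsum_mul_left]

/-- Every completely log-monotone sequence is completely monotone. -/
theorem completely_log_monotone_is_completely_monotone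
    (x : ℕ → ℝ) (hpos : ∀ k, 0 < x k) (hx0 : x 0 = 1)
    (hlog : ∀ k j : ℕ, 1 ≤ j →
      0 ≤ ∑ i ∈ Finset.range (j + 1),
        (-1 : ℝ) ^ i * (Nat.choose j i : ℝ) * Real.log (x (k + i))) :
    ∀ j k : ℕ,
      0 ≤ ∑ i ∈ Finset.range (j + 1),
        (-1 : ℝ) ^ i * (Nat.choose j i : ℝ) * x (k + i) := by
  intro j k
  rw [← Dop_iter_sum]
  set N := k + j with hN
  set L : ℕ → ℝ := fun m => Real.log (x m) with hL
  set c : ℝ := ∑ m ∈ range (N + 1), |L m| with hc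
  set w : ℕ → ℝ := L + fun _ => c with hw
  have hwCM : CMle N w := by
    intro j' k' hk'
    rcases Nat.eq_zero_or_pos j' with rfl | hj'
    · simp only [Function.iterate_zero, id_eq]
      have hle : |L k'| ≤ c := by
        rw [hc]
        exact Finset.single_le_sum (f := fun m => |L m|)
          (fun m _ => abs_nonneg _) (Finset.mem_range.mpr (by omega))
      have habs : -(L k') ≤ |L k'| := neg_le_abs _
      simp only [hw, Pi.add_apply]
      linarith
    · rw [hw, Dop_iter_add, Pi.add_apply, Dop_iter_const _ _ hj']
      have h1 := hlog k' j' hj'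
      have h2 : 0 ≤ Dop^[j'] L k' := by rw [Dop_iter_sum]; exact h1
      simpa using h2
  have hexpCM : CMle N (fun m => Real.exp (w m)) := hwCM.exp
  have hkey : (fun m => Real.exp (w m)) = Real.exp c • x := by
    funext m
    simp only [hw, hL, Pi.add_apply, Pi.smul_apply, smul_eq_mul]
    rw [Real.exp_add, Real.exp_log (hpos m)]
    ring
  have h0 := hexpCM j k (by omega)
  rw [hkey, Dop_iter_smul, Pi.smul_apply, smul_eq_mul] at h0
  nlinarith [Real.exp_pos c, h0]
end

section
/- Let {x_k}_{k∈ℕ₀} be strictly positive reals. If x_k^{1/n} defines a completely monotone sequence (in k) for each fixed n ∈ ℕ, then ∇ʲ(ln x_k) ≥ 0 for all k ∈ ℕ₀ and j ∈ ℕ, i.e. {x_k} is completely log-monotone. -/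
open Filter Real Topology

lemma tendsto_nat_mul_rpow_inv_sub_one {a : ℝ} (ha : 0 < a) :
    Tendsto (fun n : ℕ => (n : ℝ) * (a ^ ((n : ℝ)⁻¹) - 1)) atTop (𝓝 (Real.log a)) := by
  have hd : HasDerivAt (fun t : ℝ => Real.exp (Real.log a * t)) (Real.log a) 0 := by
    have := ((hasDerivAt_id (0 : ℝ)).const_mul (Real.log a)).exp
    simpa using this
  have hslope := hasDerivAt_iff_tendsto_slope.mp hd
  have hseq : Tendsto (fun n : ℕ => ((n : ℝ))⁻¹) atTop (𝓝[≠] (0 : ℝ)) := by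
    apply tendsto_nhdsWithin_of_tendsto_nhds_of_eventually_within
    · exact tendsto_inv_atTop_zero.comp tendsto_natCast_atTop_atTop
    · filter_upwards [eventually_ge_atTop 1] with n hn
      have : (0 : ℝ) < (n : ℝ) := by exact_mod_cast hn
      simp [Set.mem_setOf_eq, inv_ne_zero (ne_of_gt this)]
  have hcomp := hslope.comp hseq
  refine hcomp.congr' ?_
  filter_upwards [eventually_ge_atTop 1] with n hn
  have hn0 : (0 : ℝ) < (n : ℝ) := by exact_mod_cast hn
  have harpow : a ^ ((n : ℝ)⁻¹) = Real.exp (Real.log a * (n : ℝ)⁻¹) :=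
    Real.rpow_def_of_pos ha _
  simp only [Function.comp_apply, slope_def_field]
  rw [harpow]
  field_simp
  rw [mul_zero, Real.exp_zero]
  ring

/-- If `x_k^{1/n}` defines a completely monotone sequence for each fixed `n ∈ ℕ`,
then the strictly positive sequence `{x_k}` is completely log-monotone. -/
theorem roots_completely_monotone_imp_completely_log_monotone
    (x : ℕ → ℝ) (hpos : ∀ k, 0 < x k)
    (hroot : ∀ n : ℕ, 1 ≤ n → ∀ j k : ℕ,
      0 ≤ ∑ i ∈ Finset.range (j + 1),
        (-1 : ℝ) ^ i * (Nat.choose j i : ℝ) * (x (k + i)) ^ ((n : ℝ)⁻¹)) :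
    ∀ k j : ℕ, 1 ≤ j →
      0 ≤ ∑ i ∈ Finset.range (j + 1),
        (-1 : ℝ) ^ i * (Nat.choose j i : ℝ) * Real.log (x (k + i)) := by
  intro k j hj
  have hsum0 : ∑ i ∈ Finset.range (j + 1), (-1 : ℝ) ^ i * (Nat.choose j i : ℝ) = 0 := by
    have h0 := Int.alternating_sum_range_choose_of_ne (by omega : j ≠ 0)
    have : ((∑ i ∈ Finset.range (j + 1), (-1 : ℤ) ^ i * (j.choose i : ℤ) : ℤ) : ℝ) = 0 := by
      rw [h0]; norm_num
    push_cast at this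
    convert this using 2
  set S := fun n : ℕ => ∑ i ∈ Finset.range (j + 1),
    (-1 : ℝ) ^ i * (Nat.choose j i : ℝ) * ((n : ℝ) * (x (k + i) ^ ((n : ℝ)⁻¹) - 1)) with hS
  have hlim : Tendsto S atTop (𝓝 (∑ i ∈ Finset.range (j + 1),
      (-1 : ℝ) ^ i * (Nat.choose j i : ℝ) * Real.log (x (k + i)))) := by
    apply tendsto_finset_sum
    intro i _
    exact (tendsto_nat_mul_rpow_inv_sub_one (hpos (k + i))).const_mul _
  refine ge_of_tendsto hlim ?_
  filter_upwards [eventually_ge_atTop 1] with n hn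
  have key : S n = (n : ℝ) * ∑ i ∈ Finset.range (j + 1),
      (-1 : ℝ) ^ i * (Nat.choose j i : ℝ) * x (k + i) ^ ((n : ℝ)⁻¹) := by
    have : S n = (n : ℝ) * (∑ i ∈ Finset.range (j + 1),
        (-1 : ℝ) ^ i * (Nat.choose j i : ℝ) * x (k + i) ^ ((n : ℝ)⁻¹))
        - (n : ℝ) * (∑ i ∈ Finset.range (j + 1), (-1 : ℝ) ^ i * (Nat.choose j i : ℝ)) := by
      rw [hS, ← mul_sub, ← Finset.sum_sub_distrib, Finset.mul_sum]
      apply Finset.sum_congr rfl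
      intros; ring
    rw [this, hsum0, mul_zero, sub_zero]
  rw [key]
  exact mul_nonneg (Nat.cast_nonneg n) (hroot n hn j k)
end

section
/- Let {X_k}_{k∈ℕ} be i.i.d. [0,∞]-valued random variables with P(X₁ = 0) < 1, let {E_k}_{k∈ℕ} be i.i.d. Exp(1) random variables independent of {X_k}, and define τ_k := min{n ∈ ℕ : X₁ + ... + X_n ≥ E_k}. Then for every d ≥ 2 and all n₁,...,n_d ∈ ℕ₀: P(τ₁ > n₁, ..., τ_d > n_d) = ∏_{k=1}^{d} β_k^{n_{(d−k+1)} − n_{(d−k)}}, where β_k := E[e^{−kX₁}], n_{(1)} ≤ ... ≤ n_{(d)} are the order statistics of (n₁,...,n_d), and n_{(0)} := 0. -/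
open MeasureTheory ProbabilityTheory
open scoped ENNReal

section AuxLemmas

lemma aux_iIndepFun_inj {Ω ι κ : Type*} [MeasurableSpace Ω] {μ : Measure Ω}
    {β : Type*} {mβ : MeasurableSpace β} {f : ι → Ω → β}
    (h : iIndepFun (m := fun _ => mβ) f μ) {u : κ → ι} (hu : Function.Injective u) :
    iIndepFun (m := fun _ => mβ) (fun k => f (u k)) μ := by
  classical
  rw [iIndepFun_iff_measure_inter_preimage_eq_mul] at h ⊢
  intro S sets hsets
  have key := h (S.map ⟨u, hu⟩)
    (sets := Function.extend u sets (fun _ => Set.univ)) ?_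
  · have h1 : (⋂ i ∈ S.map ⟨u, hu⟩, f i ⁻¹' Function.extend u sets (fun _ => Set.univ) i)
        = ⋂ k ∈ S, f (u k) ⁻¹' sets k := by
      ext x
      simp only [Set.mem_iInter, Finset.mem_map, Function.Embedding.coeFn_mk]
      constructor
      · intro hx k hk
        have := hx (u k) ⟨k, hk, rfl⟩
        rwa [hu.extend_apply] at this
      · rintro hx i ⟨k, hk, rfl⟩
        rw [hu.extend_apply]
        exact hx k hk
    have h2 : (∏ i ∈ S.map ⟨u, hu⟩, μ (f i ⁻¹' Function.extend u sets (fun _ => Set.univ) i))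
        = ∏ k ∈ S, μ (f (u k) ⁻¹' sets k) := by
      rw [Finset.prod_map]
      exact Finset.prod_congr rfl fun k _ => by rw [Function.Embedding.coeFn_mk, hu.extend_apply]
    rw [h1, h2] at key
    exact key
  · intro i hi
    rcases Finset.mem_map.1 hi with ⟨k, hk, rfl⟩
    rw [Function.Embedding.coeFn_mk, hu.extend_apply]
    exact hsets k hk

lemma aux_lintegral_indep_prod {Ω : Type*} [MeasurableSpace Ω] {μ : Measure Ω}
    [IsProbabilityMeasure μ] {f : ℕ → Ω → ℝ≥0∞}
    (h : iIndepFun (m := fun _ => (inferInstance : MeasurableSpace ℝ≥0∞)) f μ)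
    (hf : ∀ i, Measurable (f i)) (s : Finset ℕ) :
    ∫⁻ ω, ∏ i ∈ s, f i ω ∂μ = ∏ i ∈ s, ∫⁻ ω, f i ω ∂μ := by
  classical
  induction s using Finset.induction with
  | empty => simp
  | @insert a s ha ih =>
    have hIndep : IndepFun (∏ j ∈ s, f j) (f a) μ :=
      h.indepFun_finsetProd_of_notMem hf ha
    have hprodmeas : Measurable (∏ j ∈ s, f j) := by
      rw [Finset.prod_fn]
      exact Finset.measurable_prod _ fun i _ => hf i
    simp_rw [Finset.prod_insert ha]
    have := lintegral_mul_eq_lintegral_mul_lintegral_of_indepFun hprodmeas (hf a) hIndep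
    calc ∫⁻ ω, f a ω * ∏ i ∈ s, f i ω ∂μ
        = ∫⁻ ω, ((∏ j ∈ s, f j) * f a) ω ∂μ := by
          apply lintegral_congr; intro ω; simp [mul_comm, Finset.prod_apply]
      _ = (∫⁻ ω, (∏ j ∈ s, f j) ω ∂μ) * ∫⁻ ω, f a ω ∂μ := this
      _ = (∫⁻ ω, ∏ j ∈ s, f j ω ∂μ) * ∫⁻ ω, f a ω ∂μ := by
          congr 1; apply lintegral_congr; intro ω; simp [Finset.prod_apply]
      _ = (∫⁻ ω, f a ω ∂μ) * ∏ i ∈ s, ∫⁻ ω, f i ω ∂μ := by rw [ih, mul_comm]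

lemma aux_comb {d N : ℕ} (hd : 0 < d) (m : Fin d → ℕ) (hm : Monotone m)
    (hN : m ⟨d - 1, Nat.sub_lt hd one_pos⟩ ≤ N) (f : ℕ → ℝ) (hf0 : f 0 = 1) :
    ∏ i ∈ Finset.range N, f (Finset.univ.filter (fun k : Fin d => i < m k)).card
      = ∏ k : Fin d, f (d - k.val) ^
          (m k - (if k.val = 0 then 0 else
            m ⟨k.val - 1, Nat.lt_of_le_of_lt (Nat.sub_le _ _) k.isLt⟩)) := by
  classical
  set last : Fin d := ⟨d - 1, Nat.sub_lt hd one_pos⟩ with hlast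
  have hle_last : ∀ k : Fin d, k ≤ last := by
    intro k; exact Fin.le_def.2 (Nat.le_sub_one_of_lt (by exact k.isLt) |>.trans le_rfl)
  set prev : Fin d → ℕ := fun k => if k.val = 0 then 0 else
    m ⟨k.val - 1, Nat.lt_of_le_of_lt (Nat.sub_le _ _) k.isLt⟩ with hprev
  have hprev_le : ∀ k, prev k ≤ m k := by
    intro k
    by_cases h0 : k.val = 0
    · simp [hprev, h0]
    · simp only [hprev, h0, if_false]
      exact hm (Fin.le_def.2 (Nat.sub_le _ _))
  have stepA : ∏ i ∈ Finset.range N, f (Finset.univ.filter (fun k : Fin d => i < m k)).card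
      = ∏ i ∈ Finset.range (m last), f (Finset.univ.filter (fun k : Fin d => i < m k)).card := by
    refine (Finset.prod_subset (Finset.range_subset_range.2 hN) ?_).symm
    intro i _ hi
    rw [Finset.mem_range, not_lt] at hi
    have : Finset.univ.filter (fun k : Fin d => i < m k) = ∅ := by
      apply Finset.filter_false_of_mem
      intro k _
      exact not_lt.2 ((hm (hle_last k)).trans hi)
    rw [this, Finset.card_empty, hf0]
  have hdisj : ∀ k l : Fin d, k < l →
      Disjoint (Finset.Ico (prev k) (m k)) (Finset.Ico (prev l) (m l)) := by
    intro k l hkl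
    have h0 : l.val ≠ 0 := Nat.pos_iff_ne_zero.1 (lt_of_le_of_lt (Nat.zero_le _) hkl)
    have : m k ≤ prev l := by
      simp only [hprev, h0, if_false]
      exact hm (Fin.le_def.2 (Nat.le_sub_one_of_lt hkl))
    rw [Finset.disjoint_left]
    intro i hik hil
    rw [Finset.mem_Ico] at hik hil
    exact absurd (lt_of_lt_of_le hik.2 (this.trans hil.1)) (lt_irrefl i)
  have hcover : Finset.range (m last)
      = Finset.univ.biUnion (fun k : Fin d => Finset.Ico (prev k) (m k)) := by
    ext i
    simp only [Finset.mem_range, Finset.mem_biUnion, Finset.mem_univ, true_and, Finset.mem_Ico]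
    constructor
    · intro hi
      set F := Finset.univ.filter (fun k : Fin d => i < m k) with hF
      have hFne : F.Nonempty := ⟨last, by simp [hF, hi]⟩
      set k0 := F.min' hFne with hk0
      have hk0F : k0 ∈ F := F.min'_mem hFne
      have hk0lt : i < m k0 := (Finset.mem_filter.1 hk0F).2
      refine ⟨k0, ?_, hk0lt⟩
      by_cases h0 : k0.val = 0
      · simp [hprev, h0]
      · simp only [hprev, h0, if_false]
        set k' : Fin d := ⟨k0.val - 1, Nat.lt_of_le_of_lt (Nat.sub_le _ _) k0.isLt⟩
        have hk'lt : k' < k0 := Fin.lt_def.2 (Nat.sub_lt (Nat.pos_of_ne_zero h0) one_pos)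
        have : k' ∉ F := fun hmem => absurd (F.min'_le _ hmem) (not_le.2 hk'lt)
        rw [hF, Finset.mem_filter] at this
        push_neg at this
        exact this (Finset.mem_univ _)
    · rintro ⟨k, _, hik⟩
      exact lt_of_lt_of_le hik (hm (hle_last k))
  rw [stepA, hcover, Finset.prod_biUnion (fun k _ l _ hkl => by
    rcases lt_or_gt_of_ne hkl with h | h
    · exact hdisj k l h
    · exact (hdisj l k h).symm)]
  refine Finset.prod_congr rfl fun k _ => ?_
  have hcard : ∀ i ∈ Finset.Ico (prev k) (m k),
      (Finset.univ.filter (fun j : Fin d => i < m j)).card = d - k.val := by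
    intro i hi
    rw [Finset.mem_Ico] at hi
    have : Finset.univ.filter (fun j : Fin d => i < m j) = Finset.Ici k := by
      ext j
      simp only [Finset.mem_filter, Finset.mem_univ, true_and, Finset.mem_Ici]
      constructor
      · intro hij
        by_contra hjk
        rw [not_le] at hjk
        have h0 : k.val ≠ 0 := Nat.pos_iff_ne_zero.1 (lt_of_le_of_lt (Nat.zero_le _) hjk)
        have hle : m j ≤ prev k := by
          simp only [hprev, h0, if_false]
          exact hm (Fin.le_def.2 (Nat.le_sub_one_of_lt hjk))
        exact absurd hij (not_lt.2 (hle.trans hi.1))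
      · intro hkj
        exact lt_of_lt_of_le hi.2 (hm hkj)
    rw [this, Fin.card_Ici]
  calc ∏ i ∈ Finset.Ico (prev k) (m k),
        f (Finset.univ.filter (fun j : Fin d => i < m j)).card
      = ∏ _i ∈ Finset.Ico (prev k) (m k), f (d - k.val) :=
        Finset.prod_congr rfl fun i hi => by rw [hcard i hi]
    _ = f (d - k.val) ^ (m k - prev k) := by rw [Finset.prod_const, Nat.card_Ico]

open Filter in
lemma aux_tsum_ae_top {Ω : Type*} [MeasurableSpace Ω] {μ : Measure Ω} [IsProbabilityMeasure μ]
    {X : ℕ → Ω → ℝ≥0∞} (hXmeas : ∀ i, Measurable (X i))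
    (hXindep : iIndepFun (m := fun _ : ℕ => (inferInstance : MeasurableSpace ℝ≥0∞)) X μ)
    (hXid : ∀ i : ℕ, Measure.map (X i) μ = Measure.map (X 0) μ)
    (hX0 : μ {ω | X 0 ω = 0} < 1) :
    ∀ᵐ ω ∂μ, ∑' i, X i ω = ∞ := by
  classical
  obtain ⟨ε, hε0, hεpos⟩ : ∃ ε : ℝ≥0∞, ε ≠ 0 ∧ 0 < μ {ω | ε ≤ X 0 ω} := by
    by_contra hcon
    push_neg at hcon
    have hzero : ∀ j : ℕ, μ {ω | ((j : ℝ≥0∞))⁻¹ ≤ X 0 ω} = 0 := by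
      intro j
      have := hcon ((j : ℝ≥0∞))⁻¹ (by simp)
      exact le_antisymm this zero_le
    have hsub : {ω | X 0 ω ≠ 0} ⊆ ⋃ j : ℕ, {ω | ((j : ℝ≥0∞))⁻¹ ≤ X 0 ω} := by
      intro ω hω
      obtain ⟨j, hj⟩ := ENNReal.exists_inv_nat_lt hω
      exact Set.mem_iUnion.2 ⟨j, hj.le⟩
    have hne : μ {ω | X 0 ω ≠ 0} = 0 :=
      measure_mono_null hsub (measure_iUnion_null hzero)
    have hcompl : {ω | X 0 ω = 0} = {ω | X 0 ω ≠ 0}ᶜ := by ext ω; simp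
    have hmeas : MeasurableSet {ω | X 0 ω ≠ 0} :=
      ((hXmeas 0) (measurableSet_singleton 0)).compl
    rw [hcompl, measure_compl hmeas (measure_ne_top μ _), hne, measure_univ] at hX0
    simp at hX0
  set A : ℕ → Set Ω := fun i => {ω | ε ≤ X i ω} with hA
  have hAmeas : ∀ i, MeasurableSet (A i) := fun i => (hXmeas i) measurableSet_Ici
  have hAindep : iIndepSet A μ := by
    refine (iIndepSet_iff_meas_biInter hAmeas).2 fun s => ?_
    exact hXindep.measure_inter_preimage_eq_mul s (sets := fun _ => Set.Ici ε)
      (fun i _ => measurableSet_Ici)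
  have hAeq : ∀ i, μ (A i) = μ (A 0) := by
    intro i
    have h1 : μ (A i) = Measure.map (X i) μ (Set.Ici ε) :=
      (Measure.map_apply (hXmeas i) measurableSet_Ici).symm
    rw [h1, hXid i, Measure.map_apply (hXmeas 0) measurableSet_Ici]
    rfl
  have htsum : ∑' i, μ (A i) = ∞ := by
    rw [tsum_congr hAeq]
    exact ENNReal.tsum_const_eq_top_of_ne_zero hεpos.ne'
  have hlimsup : μ (limsup A atTop) = 1 := measure_limsup_eq_one hAmeas hAindep htsum
  have hmeaslimsup : MeasurableSet (limsup A atTop) := by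
    rw [limsup_eq_iInf_iSup_of_nat]
    exact MeasurableSet.iInter fun n => MeasurableSet.iUnion fun i =>
      MeasurableSet.iUnion fun _ => hAmeas i
  have hae : ∀ᵐ ω ∂μ, ω ∈ limsup A atTop := by
    rw [ae_iff]
    have : {ω | ¬ ω ∈ limsup A atTop} = (limsup A atTop)ᶜ := rfl
    rw [this, measure_compl hmeaslimsup (measure_ne_top μ _), hlimsup, measure_univ, tsub_self]
  filter_upwards [hae] with ω hω
  rw [mem_limsup_iff_frequently_mem] at hω
  have hinf : {i | ω ∈ A i}.Infinite := Nat.frequently_atTop_iff_infinite.mp hω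
  have := hinf.to_subtype
  refine top_le_iff.1 ?_
  calc (∞ : ℝ≥0∞) = ∑' _ : {i | ω ∈ A i}, ε :=
        (ENNReal.tsum_const_eq_top_of_ne_zero hε0).symm
    _ ≤ ∑' i : {i | ω ∈ A i}, X i ω := ENNReal.tsum_le_tsum fun i => i.2
    _ ≤ ∑' i, X i ω := Summable.tsum_le_tsum_of_inj (↑) Subtype.val_injective
        (fun _ _ => zero_le) (fun i => le_rfl) ENNReal.summable ENNReal.summable

noncomputable def auxH : ℝ≥0∞ → ℝ≥0∞ :=
  fun t => if t = ∞ then 0 else ENNReal.ofReal (Real.exp (-t.toReal))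

lemma auxH_meas : Measurable auxH := by
  unfold auxH
  exact Measurable.ite (measurableSet_singleton ∞) measurable_const
    (ENNReal.measurable_ofReal.comp (Real.measurable_exp.comp ENNReal.measurable_toReal.neg))

lemma auxH_zero : auxH 0 = 1 := by
  simp [auxH]

lemma auxH_le_one (t : ℝ≥0∞) : auxH t ≤ 1 := by
  unfold auxH
  split
  · exact zero_le_one
  · rw [ENNReal.ofReal_le_one]
    exact Real.exp_le_one_iff.2 (neg_nonpos.2 ENNReal.toReal_nonneg)

lemma auxH_add (a b : ℝ≥0∞) : auxH (a + b) = auxH a * auxH b := by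
  unfold auxH
  by_cases ha : a = ∞
  · simp [ha]
  by_cases hb : b = ∞
  · simp [hb]
  have hab : a + b ≠ ∞ := ENNReal.add_ne_top.2 ⟨ha, hb⟩
  rw [if_neg hab, if_neg ha, if_neg hb, ENNReal.toReal_add ha hb,
    ← ENNReal.ofReal_mul (Real.exp_nonneg _), ← Real.exp_add]
  ring_nf

lemma auxH_sum {ι : Type*} (s : Finset ι) (g : ι → ℝ≥0∞) :
    auxH (∑ i ∈ s, g i) = ∏ i ∈ s, auxH (g i) := by
  classical
  induction s using Finset.induction with
  | empty => simpa using auxH_zero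
  | @insert a s ha ih =>
    rw [Finset.sum_insert ha, Finset.prod_insert ha, auxH_add, ih]

lemma aux_survival_lintegral {Ω : Type*} [MeasurableSpace Ω] {μ : Measure Ω}
    [IsProbabilityMeasure μ]
    {X : ℕ → Ω → ℝ≥0∞} {E : ℕ → Ω → ℝ≥0∞}
    (hXmeas : ∀ i, Measurable (X i)) (hEmeas : ∀ k, Measurable (E k))
    (hindep : iIndepFun (m := fun _ : ℕ ⊕ ℕ => (inferInstance : MeasurableSpace ℝ≥0∞))
      (Sum.elim X E) μ)
    (hExp : ∀ (k : ℕ) (t : ℝ), 0 ≤ t →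
      μ {ω | ENNReal.ofReal t < E k ω} = ENNReal.ofReal (Real.exp (-t)))
    (d : ℕ) (n : Fin d → ℕ) (M' : ℕ) (hM : ∀ k, n k ≤ M') :
    μ {ω | ∀ k : Fin d, (∑ i ∈ Finset.range (n k), X i ω) < E k ω}
      = ∫⁻ ω, ∏ k : Fin d, auxH (∑ i ∈ Finset.range (n k), X i ω) ∂μ := by
  classical
  have hmeas_all : ∀ i : ℕ ⊕ ℕ, Measurable (Sum.elim X E i) := by
    rintro (i | k)
    · exact hXmeas i
    · exact hEmeas k
  have hEH : ∀ (k : ℕ) (t : ℝ≥0∞), μ {ω | t < E k ω} = auxH t := by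
    intro k t
    by_cases ht : t = ∞
    · subst ht
      have : {ω | (∞ : ℝ≥0∞) < E k ω} = ∅ := by
        ext ω; simp [not_top_lt]
      simp [this, auxH]
    · have h1 : t = ENNReal.ofReal t.toReal := (ENNReal.ofReal_toReal ht).symm
      rw [auxH]
      simp only [if_neg ht]
      calc μ {ω | t < E k ω} = μ {ω | ENNReal.ofReal t.toReal < E k ω} := by rw [← h1]
        _ = ENNReal.ofReal (Real.exp (-t.toReal)) := hExp k t.toReal ENNReal.toReal_nonneg
  have hEindep : iIndepFun (m := fun _ : ℕ => (inferInstance : MeasurableSpace ℝ≥0∞)) E μ :=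
    aux_iIndepFun_inj hindep Sum.inr_injective
  have hEprod : ∀ t : Fin d → ℝ≥0∞,
      μ (⋂ k : Fin d, E k.val ⁻¹' Set.Ioi (t k)) = ∏ k : Fin d, auxH (t k) := by
    intro t
    have hE' : iIndepFun (m := fun _ : Fin d => (inferInstance : MeasurableSpace ℝ≥0∞))
        (fun k : Fin d => E k.val) μ :=
      aux_iIndepFun_inj hEindep Fin.val_injective
    have := hE'.measure_inter_preimage_eq_mul Finset.univ
      (sets := fun k => Set.Ioi (t k)) (fun k _ => measurableSet_Ioi)
    have hset : (⋂ k : Fin d, E k.val ⁻¹' Set.Ioi (t k))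
        = ⋂ k ∈ Finset.univ, E (k : Fin d).val ⁻¹' Set.Ioi (t k) := by simp
    rw [hset, this]
    refine Finset.prod_congr rfl fun k _ => ?_
    have hpre : E k.val ⁻¹' Set.Ioi (t k) = {ω | t k < E k.val ω} := rfl
    rw [hpre, hEH]
  set V : Ω → (Fin d → ℝ≥0∞) := fun ω k => ∑ i ∈ Finset.range (n k), X i ω with hV
  set W : Ω → (Fin d → ℝ≥0∞) := fun ω k => E k.val ω with hW
  have hVmeas : Measurable V :=
    measurable_pi_lambda _ fun k => Finset.measurable_sum _ fun i _ => hXmeas i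
  have hWmeas : Measurable W := measurable_pi_lambda _ fun k => hEmeas k.val
  have hVW : IndepFun V W μ := by
    set SX : Finset (ℕ ⊕ ℕ) := (Finset.range M').map ⟨Sum.inl, Sum.inl_injective⟩ with hSX
    set TE : Finset (ℕ ⊕ ℕ) := (Finset.range d).map ⟨Sum.inr, Sum.inr_injective⟩ with hTE
    have hdisj : Disjoint SX TE := by
      rw [Finset.disjoint_left]
      rintro x hx hy
      rcases Finset.mem_map.1 hx with ⟨i, _, rfl⟩
      rcases Finset.mem_map.1 hy with ⟨j, _, hj⟩
      simp at hj
    have base := hindep.indepFun_finset SX TE hdisj hmeas_all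
    have hmemS : ∀ (k : Fin d) (i : ℕ), i ∈ Finset.range (n k) → (Sum.inl i : ℕ ⊕ ℕ) ∈ SX := by
      intro k i hi
      rw [hSX, Finset.mem_map]
      exact ⟨i, Finset.mem_range.2 (lt_of_lt_of_le (Finset.mem_range.1 hi) (hM k)), rfl⟩
    have hmemT : ∀ k : Fin d, (Sum.inr k.val : ℕ ⊕ ℕ) ∈ TE := by
      intro k
      rw [hTE, Finset.mem_map]
      exact ⟨k.val, Finset.mem_range.2 k.isLt, rfl⟩
    set φ : ({x // x ∈ SX} → ℝ≥0∞) → (Fin d → ℝ≥0∞) :=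
      fun v k => ∑ i ∈ (Finset.range (n k)).attach, v ⟨Sum.inl i.val, hmemS k i.val i.2⟩ with hφ
    set ψ : ({x // x ∈ TE} → ℝ≥0∞) → (Fin d → ℝ≥0∞) :=
      fun w k => w ⟨Sum.inr k.val, hmemT k⟩ with hψ
    have hφmeas : Measurable φ :=
      measurable_pi_lambda _ fun k => Finset.measurable_sum _ fun i _ => measurable_pi_apply _
    have hψmeas : Measurable ψ := measurable_pi_lambda _ fun k => measurable_pi_apply _
    have hres := base.comp hφmeas hψmeas
    have hl : (φ ∘ fun a (i : {x // x ∈ SX}) => Sum.elim X E i.val a) = V := by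
      funext ω
      funext k
      simp only [Function.comp_apply, hφ, hV]
      rw [← Finset.sum_attach (Finset.range (n k)) (fun i => X i ω)]
      rfl
    have hr : (ψ ∘ fun a (i : {x // x ∈ TE}) => Sum.elim X E i.val a) = W := by
      funext ω; funext k; rfl
    rwa [hl, hr] at hres
  set D : Set ((Fin d → ℝ≥0∞) × (Fin d → ℝ≥0∞)) := ⋂ k : Fin d, {p | p.1 k < p.2 k} with hD
  have hDmeas : MeasurableSet D :=
    MeasurableSet.iInter fun k => measurableSet_lt
      (measurable_fst.eval) (measurable_snd.eval)
  have hevent : {ω | ∀ k : Fin d, (∑ i ∈ Finset.range (n k), X i ω) < E k.val ω}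
      = (fun ω => (V ω, W ω)) ⁻¹' D := by
    ext ω
    simp [hD, hV, hW]
  have hmap : μ.map (fun ω => (V ω, W ω)) = (μ.map V).prod (μ.map W) :=
    (ProbabilityTheory.indepFun_iff_map_prod_eq_prod_map_map hVmeas.aemeasurable
      hWmeas.aemeasurable).1 hVW
  have hprob : μ {ω | ∀ k : Fin d, (∑ i ∈ Finset.range (n k), X i ω) < E k.val ω}
      = ∫⁻ x, ∏ k : Fin d, auxH (x k) ∂(μ.map V) := by
    rw [hevent, ← Measure.map_apply (hVmeas.prodMk hWmeas) hDmeas, hmap]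
    have : IsProbabilityMeasure (μ.map W) := Measure.isProbabilityMeasure_map hWmeas.aemeasurable
    rw [Measure.prod_apply hDmeas]
    refine lintegral_congr fun x => ?_
    have hslice : Prod.mk x ⁻¹' D = ⋂ k : Fin d, (fun e : Fin d → ℝ≥0∞ => e k) ⁻¹' Set.Ioi (x k) := by
      ext e; simp [hD]
    rw [hslice, Measure.map_apply hWmeas (MeasurableSet.iInter fun k =>
      (measurable_pi_apply k) measurableSet_Ioi)]
    have hWpre : W ⁻¹' (⋂ k : Fin d, (fun e : Fin d → ℝ≥0∞ => e k) ⁻¹' Set.Ioi (x k))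
        = ⋂ k : Fin d, E k.val ⁻¹' Set.Ioi (x k) := by
      ext ω; simp [hW]
    rw [hWpre, hEprod]
  rw [hprob, lintegral_map (f := fun x : Fin d → ℝ≥0∞ => ∏ k : Fin d, auxH (x k))
    (Finset.measurable_prod _ fun k _ => auxH_meas.comp (measurable_pi_apply k)) hVmeas]

end AuxLemmas

/-- Conditionally i.i.d. construction of the extendible wide-sense geometric law:
for an i.i.d. sequence of `[0,∞]`-valued increments `X`, an independent i.i.d.
sequence of unit exponential variables `E`, and first-passage times
`τ_k = min {n ≥ 1 : X₁ + ⋯ + X_n ≥ E_k}`, the joint survival function of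
`(τ₁,…,τ_d)` is `∏_{k=1}^d β_k^{n_{(d-k+1)} - n_{(d-k)}}` with `β_k = E[e^{-k X₁}]`. -/
theorem random_walk_model_survival
    {Ω : Type*} [MeasurableSpace Ω] (μ : Measure Ω) [IsProbabilityMeasure μ]
    (X : ℕ → Ω → ℝ≥0∞) (E : ℕ → Ω → ℝ≥0∞)
    (hXmeas : ∀ i, Measurable (X i)) (hEmeas : ∀ k, Measurable (E k))
    (hindep : iIndepFun (m := fun _ : ℕ ⊕ ℕ => (inferInstance : MeasurableSpace ℝ≥0∞))
      (Sum.elim X E) μ)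
    (hXid : ∀ i : ℕ, Measure.map (X i) μ = Measure.map (X 0) μ)
    (hExp : ∀ (k : ℕ) (t : ℝ), 0 ≤ t →
      μ {ω | ENNReal.ofReal t < E k ω} = ENNReal.ofReal (Real.exp (-t)))
    (hX0 : μ {ω | X 0 ω = 0} < 1)
    (τ : ℕ → Ω → ℕ)
    (hτ : ∀ (k : ℕ) (ω : Ω), τ k ω =
      sInf {n : ℕ | 1 ≤ n ∧ E k ω ≤ ∑ i ∈ Finset.range n, X i ω})
    (h : ℝ≥0∞ → ℝ)
    (hh : ∀ x : ℝ≥0∞, h x = if x = ∞ then 0 else Real.exp (-x.toReal))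
    (β : ℕ → ℝ) (hβ : ∀ k : ℕ, β k = ∫ ω, (h (X 0 ω)) ^ k ∂μ) :
    ∀ (d : ℕ), 2 ≤ d → ∀ (n : Fin d → ℕ) (π : Equiv.Perm (Fin d)),
      Monotone (fun i => n (π i)) →
      (μ {ω | ∀ k : Fin d, n k < τ k.val ω}).toReal =
        ∏ k : Fin d,
          β (d - k.val) ^
            (n (π k) - (if k.val = 0 then 0 else
              n (π ⟨k.val - 1, Nat.lt_of_le_of_lt (Nat.sub_le _ _) k.isLt⟩))) := by
  intro d hd n π hmono
  classical
  have hd0 : 0 < d := lt_of_lt_of_le two_pos hd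
  have hle_last : ∀ k : Fin d, k ≤ (⟨d - 1, Nat.sub_lt hd0 one_pos⟩ : Fin d) :=
    fun k => Fin.le_def.2 (Nat.le_sub_one_of_lt k.isLt)
  set M' : ℕ := n (π ⟨d - 1, Nat.sub_lt hd0 one_pos⟩) with hM'def
  have hM : ∀ k, n k ≤ M' := by
    intro k
    have h1 : n k = n (π (π.symm k)) := by rw [Equiv.apply_symm_apply]
    rw [h1]
    exact hmono (hle_last (π.symm k))
  have hXindep : iIndepFun (m := fun _ : ℕ => (inferInstance : MeasurableSpace ℝ≥0∞)) X μ :=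
    aux_iIndepFun_inj hindep Sum.inl_injective
  -- a.e. facts
  have hS0 : ∀ᵐ ω ∂μ, ∑' i, X i ω = ∞ := aux_tsum_ae_top hXmeas hXindep hXid hX0
  have hEposfin : ∀ k : ℕ, ∀ᵐ ω ∂μ, 0 < E k ω ∧ E k ω ≠ ∞ := by
    intro k
    have h1 : μ {ω | 0 < E k ω} = 1 := by
      have := hExp k 0 le_rfl
      simpa using this
    have hmeas1 : MeasurableSet {ω | 0 < E k ω} := hEmeas k measurableSet_Ioi
    have hpos : ∀ᵐ ω ∂μ, 0 < E k ω := by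
      rw [ae_iff]
      have h2 : {ω | ¬ 0 < E k ω} = {ω | 0 < E k ω}ᶜ := rfl
      rw [h2, measure_compl hmeas1 (measure_ne_top μ _), h1, measure_univ, tsub_self]
    have hfin : ∀ᵐ ω ∂μ, E k ω ≠ ∞ := by
      rw [ae_iff]
      simp only [not_not]
      have hb : ∀ j : ℕ, μ {ω | E k ω = ∞} ≤ ENNReal.ofReal (Real.exp (-(j : ℝ))) := by
        intro j
        refine (measure_mono ?_).trans_eq (hExp k j (Nat.cast_nonneg j))
        intro ω hω
        simp only [Set.mem_setOf_eq] at hω ⊢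
        rw [hω]
        exact ENNReal.ofReal_lt_top
      have htend : Filter.Tendsto (fun j : ℕ => ENNReal.ofReal (Real.exp (-(j : ℝ))))
          Filter.atTop (nhds 0) := by
        have h2 : Filter.Tendsto (fun j : ℕ => Real.exp (-(j : ℝ))) Filter.atTop (nhds 0) :=
          Real.tendsto_exp_atBot.comp
            (Filter.tendsto_neg_atBot_iff.2 tendsto_natCast_atTop_atTop)
        have := ENNReal.tendsto_ofReal h2
        simpa using this
      have hle := ge_of_tendsto' htend hb
      exact le_antisymm hle zero_le
    exact hpos.and hfin
  have hG : ∀ᵐ ω ∂μ, (∑' i, X i ω = ∞) ∧ ∀ k : Fin d, 0 < E k.val ω ∧ E k.val ω ≠ ∞ :=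
    hS0.and (ae_all_iff.2 fun k => hEposfin k.val)
  have hSmono : ∀ (ω : Ω) {a b : ℕ}, a ≤ b →
      (∑ i ∈ Finset.range a, X i ω) ≤ ∑ i ∈ Finset.range b, X i ω := by
    intro ω a b hab
    exact Finset.sum_le_sum_of_subset (Finset.range_subset_range.2 hab)
  have hiff : ∀ ω, (∑' i, X i ω = ∞) → ∀ (k nk : ℕ), 0 < E k ω → E k ω ≠ ∞ →
      (nk < τ k ω ↔ (∑ i ∈ Finset.range nk, X i ω) < E k ω) := by
    intro ω hsum k nk hEpos hEfin
    constructor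
    · intro hlt
      by_contra hnl
      rw [not_lt] at hnl
      rcases Nat.eq_zero_or_pos nk with h0 | hpos
      · subst h0
        simp only [Finset.range_zero, Finset.sum_empty] at hnl
        exact absurd (nonpos_iff_eq_zero.1 hnl) hEpos.ne'
      · have hτle : τ k ω ≤ nk := by
          rw [hτ]
          exact Nat.sInf_le ⟨hpos, hnl⟩
        omega
    · intro hlt
      have hne : {n_ : ℕ | 1 ≤ n_ ∧ E k ω ≤ ∑ i ∈ Finset.range n_, X i ω}.Nonempty := by
        have htop : E k ω < ⨆ n_ : ℕ, ∑ i ∈ Finset.range n_, X i ω := by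
          rw [← ENNReal.tsum_eq_iSup_nat, hsum]
          exact lt_top_iff_ne_top.2 hEfin
        obtain ⟨m_, hm⟩ := lt_iSup_iff.1 htop
        rcases Nat.eq_zero_or_pos m_ with h0 | h1
        · subst h0
          simp at hm
        · exact ⟨m_, h1, hm.le⟩
      have hmem := Nat.sInf_mem hne
      by_contra hnl
      rw [not_lt] at hnl
      rw [← hτ] at hmem
      exact absurd hlt (not_lt.2 (hmem.2.trans (hSmono ω hnl)))
  have heq : {ω | ∀ k : Fin d, n k < τ k.val ω}
      =ᵐ[μ] {ω | ∀ k : Fin d, (∑ i ∈ Finset.range (n k), X i ω) < E k.val ω} := by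
    rw [Filter.eventuallyEq_set]
    filter_upwards [hG] with ω hω
    exact forall_congr' fun k => hiff ω hω.1 k.val (n k) (hω.2 k).1 (hω.2 k).2
  rw [measure_congr heq, aux_survival_lintegral hXmeas hEmeas hindep hExp d n M' hM]
  set c : ℕ → ℕ := fun i => (Finset.univ.filter fun k : Fin d => i < n k).card with hc
  have hrw : ∀ ω, ∏ k : Fin d, auxH (∑ i ∈ Finset.range (n k), X i ω)
      = ∏ i ∈ Finset.range M', auxH (X i ω) ^ (c i) := by
    intro ω
    calc ∏ k : Fin d, auxH (∑ i ∈ Finset.range (n k), X i ω)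
        = ∏ k : Fin d, ∏ i ∈ Finset.range (n k), auxH (X i ω) :=
          Finset.prod_congr rfl fun k _ => auxH_sum _ _
      _ = ∏ k : Fin d, ∏ i ∈ Finset.range M', (if i < n k then auxH (X i ω) else 1) := by
          refine Finset.prod_congr rfl fun k _ => ?_
          have h1 : ∏ i ∈ Finset.range (n k), auxH (X i ω)
              = ∏ i ∈ Finset.range (n k), (if i < n k then auxH (X i ω) else 1) :=
            Finset.prod_congr rfl fun i hi => (if_pos (Finset.mem_range.1 hi)).symm
          rw [h1]
          exact Finset.prod_subset (Finset.range_subset_range.2 (hM k))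
            (fun i _ hi => if_neg (fun hcon => hi (Finset.mem_range.2 hcon)))
      _ = ∏ i ∈ Finset.range M', ∏ k : Fin d, (if i < n k then auxH (X i ω) else 1) :=
          Finset.prod_comm
      _ = ∏ i ∈ Finset.range M', auxH (X i ω) ^ (c i) := by
          refine Finset.prod_congr rfl fun i _ => ?_
          rw [← Finset.prod_filter, Finset.prod_const]
  rw [lintegral_congr hrw]
  have hfmeas : ∀ i : ℕ, Measurable (fun ω => auxH (X i ω) ^ (c i)) :=
    fun i => (auxH_meas.comp (hXmeas i)).pow_const _
  have hfind : iIndepFun (m := fun _ : ℕ => (inferInstance : MeasurableSpace ℝ≥0∞))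
      (fun i => fun ω => auxH (X i ω) ^ (c i)) μ :=
    hXindep.comp (fun i x => auxH x ^ (c i)) (fun i => auxH_meas.pow_const _)
  rw [aux_lintegral_indep_prod hfind hfmeas (Finset.range M')]
  have hBc : ∀ (i cc : ℕ), ∫⁻ ω, auxH (X i ω) ^ cc ∂μ = ∫⁻ ω, auxH (X 0 ω) ^ cc ∂μ := by
    intro i cc
    have hgm : Measurable fun x : ℝ≥0∞ => auxH x ^ cc := auxH_meas.pow_const _
    rw [← lintegral_map hgm (hXmeas i), hXid i, lintegral_map hgm (hXmeas 0)]
  have hstep : (∏ i ∈ Finset.range M', ∫⁻ ω, auxH (X i ω) ^ (c i) ∂μ)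
      = ∏ i ∈ Finset.range M', ∫⁻ ω, auxH (X 0 ω) ^ (c i) ∂μ :=
    Finset.prod_congr rfl fun i _ => hBc i (c i)
  rw [hstep, ENNReal.toReal_prod]
  -- identify β with the lintegral
  have hhfun : h = fun x : ℝ≥0∞ => if x = ∞ then 0 else Real.exp (-x.toReal) := funext hh
  have hmeas_h : Measurable h := by
    rw [hhfun]
    exact Measurable.ite (measurableSet_singleton ∞) measurable_const
      (Real.measurable_exp.comp ENNReal.measurable_toReal.neg)
  have hnonneg : ∀ x, 0 ≤ h x := by
    intro x; rw [hh]; split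
    · exact le_rfl
    · exact (Real.exp_pos _).le
  have hofReal : ∀ x, ENNReal.ofReal (h x) = auxH x := by
    intro x; rw [hh]; unfold auxH; split
    · simp
    · rfl
  have hβB : ∀ cc : ℕ, (∫⁻ ω, auxH (X 0 ω) ^ cc ∂μ).toReal = β cc := by
    intro cc
    rw [hβ cc, integral_eq_lintegral_of_nonneg_ae
      (Filter.Eventually.of_forall fun ω => pow_nonneg (hnonneg _) cc)
      (((hmeas_h.comp (hXmeas 0)).pow_const cc).aestronglyMeasurable)]
    congr 1
    refine lintegral_congr fun ω => ?_
    rw [ENNReal.ofReal_pow (hnonneg _), hofReal]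
  have hβ0 : β 0 = 1 := by
    rw [hβ 0]
    simp
  calc ∏ i ∈ Finset.range M', (∫⁻ ω, auxH (X 0 ω) ^ (c i) ∂μ).toReal
      = ∏ i ∈ Finset.range M', β (c i) :=
        Finset.prod_congr rfl fun i _ => hβB (c i)
    _ = ∏ i ∈ Finset.range M',
          β ((Finset.univ.filter fun k : Fin d => i < n (π k)).card) := by
        refine Finset.prod_congr rfl fun i _ => ?_
        congr 1
        show (Finset.univ.filter fun k : Fin d => i < n k).card
            = (Finset.univ.filter fun k : Fin d => i < n (π k)).card
        rw [Finset.card_filter, Finset.card_filter]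
        exact (Equiv.sum_comp π fun k : Fin d => if i < n k then 1 else 0).symm
    _ = _ := aux_comb hd0 (fun k => n (π k)) hmono le_rfl β hβ0
end

section
/- Let (τ₁, τ₂) have the exchangeable bivariate wide-sense geometric survival function P(τ₁ > n₁, τ₂ > n₂) = β₂^{min(n₁,n₂)} β₁^{max(n₁,n₂)−min(n₁,n₂)} with 0 < β₁ < 1, 0 ≤ β₂ ≤ β₁, and 1 − 2β₁ + β₂ ≥ 0. Then Corr[τ₁, τ₂] = (β₂ − β₁²) / (β₁(1 − β₂)). -/
open MeasureTheory

open scoped ENNReal NNReal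

lemma tsum_ite_lt (n : ℕ) : ∑' i : ℕ, (if i < n then (1:ℝ≥0∞) else 0) = n := by
  rw [tsum_eq_sum (s := Finset.range n) (fun i hi => by simp [Finset.mem_range] at hi; simp [hi])]
  rw [Finset.sum_ite_of_true (by intro i hi; simpa [Finset.mem_range] using hi)]; simp

lemma lint_one {Ω : Type*} [MeasurableSpace Ω] (μ : Measure Ω) (X : Ω → ℕ)
    (hX : Measurable X) :
    ∫⁻ ω, (X ω : ℝ≥0∞) ∂μ = ∑' n : ℕ, μ {ω | n < X ω} := by
  have hms : ∀ n : ℕ, MeasurableSet {ω | n < X ω} := fun n => hX measurableSet_Ioi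
  have hpt : ∀ ω, (X ω : ℝ≥0∞) = ∑' n : ℕ, ({ω | n < X ω}).indicator (1 : Ω → ℝ≥0∞) ω := by
    intro ω
    simp only [Set.indicator_apply, Set.mem_setOf_eq, Pi.one_apply]
    exact (tsum_ite_lt (X ω)).symm
  rw [lintegral_congr hpt, lintegral_tsum
    (fun n => ((measurable_one).indicator (hms n)).aemeasurable)]
  simp [lintegral_indicator_one (hms _)]

lemma lint_two {Ω : Type*} [MeasurableSpace Ω] (μ : Measure Ω) (X Y : Ω → ℕ)
    (hX : Measurable X) (hY : Measurable Y) :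
    ∫⁻ ω, (X ω : ℝ≥0∞) * (Y ω : ℝ≥0∞) ∂μ
      = ∑' p : ℕ × ℕ, μ {ω | p.1 < X ω ∧ p.2 < Y ω} := by
  have hms : ∀ p : ℕ × ℕ, MeasurableSet {ω | p.1 < X ω ∧ p.2 < Y ω} := fun p =>
    (hX measurableSet_Ioi).inter (hY measurableSet_Ioi)
  have hpt : ∀ ω, (X ω : ℝ≥0∞) * (Y ω : ℝ≥0∞)
      = ∑' p : ℕ × ℕ, ({ω | p.1 < X ω ∧ p.2 < Y ω}).indicator (1 : Ω → ℝ≥0∞) ω := by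
    intro ω
    simp only [Set.indicator_apply, Set.mem_setOf_eq, Pi.one_apply]
    rw [ENNReal.tsum_prod']
    have : ∀ i j : ℕ, (if i < X ω ∧ j < Y ω then (1:ℝ≥0∞) else 0)
        = (if i < X ω then (1:ℝ≥0∞) else 0) * (if j < Y ω then (1:ℝ≥0∞) else 0) := by
      intro i j
      by_cases h1 : i < X ω <;> by_cases h2 : j < Y ω <;> simp [h1, h2]
    simp_rw [this, ENNReal.tsum_mul_left, ENNReal.tsum_mul_right, tsum_ite_lt]
  rw [lintegral_congr hpt, lintegral_tsum
    (fun p => ((measurable_one).indicator (hms p)).aemeasurable)]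
  simp [lintegral_indicator_one (hms _)]

lemma double_geo (b c : ℝ≥0∞) :
    ∑' p : ℕ × ℕ, c ^ min p.1 p.2 * b ^ (max p.1 p.2 - min p.1 p.2)
      = (1 - c)⁻¹ * (1 - b)⁻¹ * (1 + b) := by
  set f : ℕ × ℕ → ℝ≥0∞ := fun p => c ^ min p.1 p.2 * b ^ (max p.1 p.2 - min p.1 p.2) with hf
  have hsplit : ∀ p : ℕ × ℕ, f p = (if p.2 ≤ p.1 then f p else 0) + (if p.1 < p.2 then f p else 0) := by
    intro p
    rcases le_or_gt p.2 p.1 with h | h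
    · simp [h, not_lt.2 h]
    · simp [h, not_le.2 h]
  rw [tsum_congr hsplit, ENNReal.tsum_add]
  have hG : Function.Injective (fun q : ℕ × ℕ => ((q.1 + q.2, q.1) : ℕ × ℕ)) := by
    intro a b h
    simp only [Prod.mk.injEq] at h
    exact Prod.ext (by omega) (by omega)
  have hH : Function.Injective (fun q : ℕ × ℕ => ((q.1, q.1 + q.2 + 1) : ℕ × ℕ)) := by
    intro a b h
    simp only [Prod.mk.injEq] at h
    exact Prod.ext (by omega) (by omega)
  have h1 : ∑' p : ℕ × ℕ, (if p.2 ≤ p.1 then f p else 0) = (1 - c)⁻¹ * (1 - b)⁻¹ := by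
    rw [← hG.tsum_eq]
    · have : ∀ q : ℕ × ℕ, (if (q.1 + q.2, q.1).2 ≤ (q.1 + q.2, q.1).1
          then f (q.1 + q.2, q.1) else 0) = c ^ q.1 * b ^ q.2 := by
        intro q
        have h1 : q.1 ≤ q.1 + q.2 := Nat.le_add_right _ _
        have hmin : min (q.1 + q.2) q.1 = q.1 := min_eq_right h1
        have hmax : max (q.1 + q.2) q.1 = q.1 + q.2 := max_eq_left h1
        have he : q.1 + q.2 - q.1 = q.2 := by omega
        rw [if_pos h1]
        simp only [hf]
        rw [hmin, hmax, he]
      rw [tsum_congr this, ENNReal.tsum_prod']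
      simp_rw [ENNReal.tsum_mul_left, ENNReal.tsum_geometric, ENNReal.tsum_mul_right,
        ENNReal.tsum_geometric]
    · intro p hp
      simp only [Function.mem_support] at hp
      have hle : p.2 ≤ p.1 := by by_contra h; simp [h] at hp
      exact ⟨(p.2, p.1 - p.2), Prod.ext (by simp; omega) (by simp)⟩
  have h2 : ∑' p : ℕ × ℕ, (if p.1 < p.2 then f p else 0) = (1 - c)⁻¹ * ((1 - b)⁻¹ * b) := by
    rw [← hH.tsum_eq]
    · have : ∀ q : ℕ × ℕ, (if (q.1, q.1 + q.2 + 1).1 < (q.1, q.1 + q.2 + 1).2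
          then f (q.1, q.1 + q.2 + 1) else 0) = c ^ q.1 * b ^ (q.2 + 1) := by
        intro q
        have h1 : q.1 < q.1 + q.2 + 1 := by omega
        have hmin : min q.1 (q.1 + q.2 + 1) = q.1 := min_eq_left (by omega)
        have hmax : max q.1 (q.1 + q.2 + 1) = q.1 + q.2 + 1 := max_eq_right (by omega)
        have he : q.1 + q.2 + 1 - q.1 = q.2 + 1 := by omega
        rw [if_pos h1]
        simp only [hf]
        rw [hmin, hmax, he]
      rw [tsum_congr this, ENNReal.tsum_prod']
      simp_rw [ENNReal.tsum_mul_left, pow_succ, ENNReal.tsum_mul_right, ENNReal.tsum_geometric]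
    · intro p hp
      simp only [Function.mem_support] at hp
      have hlt : p.1 < p.2 := by by_contra h; simp [h] at hp
      exact ⟨(p.1, p.2 - p.1 - 1), Prod.ext (by simp) (by simp; omega)⟩
  rw [h1, h2]
  ring

/-- Correlation of the exchangeable bivariate wide-sense geometric distribution:
if `P(τ₁ > n₁, τ₂ > n₂) = β₂^{min(n₁,n₂)} β₁^{max(n₁,n₂)-min(n₁,n₂)}`, then
`Corr[τ₁,τ₂] = (β₂ - β₁²)/(β₁(1 - β₂))`. -/
theorem exchangeable_bivariate_wide_geometric_correlation
    {Ω : Type*} [MeasurableSpace Ω] (μ : Measure Ω) [IsProbabilityMeasure μ]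
    (τ₁ τ₂ : Ω → ℕ) (hmeas₁ : Measurable τ₁) (hmeas₂ : Measurable τ₂)
    (β₁ β₂ : ℝ) (hβ₁ : 0 < β₁) (hβ₁' : β₁ < 1)
    (hβ₂0 : 0 ≤ β₂) (hβ₂1 : β₂ ≤ β₁) (hmon : 0 ≤ 1 - 2 * β₁ + β₂)
    (hsurv : ∀ n₁ n₂ : ℕ, μ {ω | n₁ < τ₁ ω ∧ n₂ < τ₂ ω} =
      ENNReal.ofReal (β₂ ^ min n₁ n₂ * β₁ ^ (max n₁ n₂ - min n₁ n₂))) :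
    (∫ ω, (τ₁ ω : ℝ) * (τ₂ ω : ℝ) ∂μ -
        (∫ ω, (τ₁ ω : ℝ) ∂μ) * (∫ ω, (τ₂ ω : ℝ) ∂μ)) /
      (Real.sqrt (∫ ω, (τ₁ ω : ℝ) ^ 2 ∂μ - (∫ ω, (τ₁ ω : ℝ) ∂μ) ^ 2) *
        Real.sqrt (∫ ω, (τ₂ ω : ℝ) ^ 2 ∂μ - (∫ ω, (τ₂ ω : ℝ) ∂μ) ^ 2)) =
      (β₂ - β₁ ^ 2) / (β₁ * (1 - β₂)) := by
  have hβ₂1' : β₂ < 1 := lt_of_le_of_lt hβ₂1 hβ₁'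
  set b₁ : ℝ≥0∞ := ENNReal.ofReal β₁ with hb₁
  set b₂ : ℝ≥0∞ := ENNReal.ofReal β₂ with hb₂
  have h1b₁ : (1 : ℝ≥0∞) - b₁ = ENNReal.ofReal (1 - β₁) := by
    rw [ENNReal.ofReal_sub _ hβ₁.le, ENNReal.ofReal_one]
  have h1b₂ : (1 : ℝ≥0∞) - b₂ = ENNReal.ofReal (1 - β₂) := by
    rw [ENNReal.ofReal_sub _ hβ₂0, ENNReal.ofReal_one]
  -- null set : τ₂ = 0 (and τ₁ = 0) has probability zero
  have h00 : μ {ω | 0 < τ₁ ω ∧ 0 < τ₂ ω} = 1 := by simpa using hsurv 0 0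
  have hms00 : MeasurableSet {ω | 0 < τ₁ ω ∧ 0 < τ₂ ω} :=
    (hmeas₁ measurableSet_Ioi).inter (hmeas₂ measurableSet_Ioi)
  have hnull : μ {ω | 0 < τ₁ ω ∧ 0 < τ₂ ω}ᶜ = 0 := by
    rw [measure_compl hms00 (measure_ne_top _ _), h00, measure_univ, tsub_self]
  -- marginals
  have hm₁ : ∀ n : ℕ, μ {ω | n < τ₁ ω} = b₁ ^ n := by
    intro n
    have hs : μ {ω | n < τ₁ ω ∧ 0 < τ₂ ω} = b₁ ^ n := by
      rw [hsurv n 0]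
      simp [ENNReal.ofReal_pow hβ₁.le, hb₁]
    refine le_antisymm ?_ ?_
    · calc μ {ω | n < τ₁ ω}
          ≤ μ ({ω | n < τ₁ ω ∧ 0 < τ₂ ω} ∪ {ω | 0 < τ₁ ω ∧ 0 < τ₂ ω}ᶜ) := by
            apply measure_mono
            intro ω hω
            by_cases h : 0 < τ₁ ω ∧ 0 < τ₂ ω
            · exact Or.inl ⟨hω, h.2⟩
            · exact Or.inr h
        _ ≤ μ {ω | n < τ₁ ω ∧ 0 < τ₂ ω} + μ {ω | 0 < τ₁ ω ∧ 0 < τ₂ ω}ᶜ := measure_union_le _ _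
        _ = b₁ ^ n := by rw [hs, hnull, add_zero]
    · rw [← hs]; exact measure_mono fun ω hω => hω.1
  have hm₂ : ∀ n : ℕ, μ {ω | n < τ₂ ω} = b₁ ^ n := by
    intro n
    have hs : μ {ω | 0 < τ₁ ω ∧ n < τ₂ ω} = b₁ ^ n := by
      rw [hsurv 0 n]
      simp [ENNReal.ofReal_pow hβ₁.le, hb₁]
    refine le_antisymm ?_ ?_
    · calc μ {ω | n < τ₂ ω}
          ≤ μ ({ω | 0 < τ₁ ω ∧ n < τ₂ ω} ∪ {ω | 0 < τ₁ ω ∧ 0 < τ₂ ω}ᶜ) := by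
            apply measure_mono
            intro ω hω
            by_cases h : 0 < τ₁ ω ∧ 0 < τ₂ ω
            · exact Or.inl ⟨h.1, hω⟩
            · exact Or.inr h
        _ ≤ μ {ω | 0 < τ₁ ω ∧ n < τ₂ ω} + μ {ω | 0 < τ₁ ω ∧ 0 < τ₂ ω}ᶜ := measure_union_le _ _
        _ = b₁ ^ n := by rw [hs, hnull, add_zero]
    · rw [← hs]; exact measure_mono fun ω hω => hω.2
  -- measurabilities of real-valued versions
  have hmr₁ : Measurable (fun ω => (τ₁ ω : ℝ)) := measurable_from_top.comp hmeas₁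
  have hmr₂ : Measurable (fun ω => (τ₂ ω : ℝ)) := measurable_from_top.comp hmeas₂
  have hsm₁ : AEStronglyMeasurable (fun ω => (τ₁ ω : ℝ)) μ := hmr₁.aestronglyMeasurable
  have hsm₂ : AEStronglyMeasurable (fun ω => (τ₂ ω : ℝ)) μ := hmr₂.aestronglyMeasurable
  -- first moments
  have hne₁ : (1 : ℝ) - β₁ ≠ 0 := by linarith
  have hne₂ : (1 : ℝ) - β₂ ≠ 0 := by linarith
  have hI₁ : ∫ ω, (τ₁ ω : ℝ) ∂μ = (1 - β₁)⁻¹ := by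
    rw [integral_eq_lintegral_of_nonneg_ae (Filter.Eventually.of_forall fun ω => by positivity)
      hsm₁]
    have : ∀ ω, ENNReal.ofReal ((τ₁ ω : ℝ)) = ((τ₁ ω : ℕ) : ℝ≥0∞) := fun ω =>
      ENNReal.ofReal_natCast _
    rw [lintegral_congr this, lint_one μ τ₁ hmeas₁]
    rw [tsum_congr hm₁, ENNReal.tsum_geometric, h1b₁]
    rw [← ENNReal.ofReal_inv_of_pos (by linarith), ENNReal.toReal_ofReal (inv_nonneg.mpr (by linarith))]
  have hI₂ : ∫ ω, (τ₂ ω : ℝ) ∂μ = (1 - β₁)⁻¹ := by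
    rw [integral_eq_lintegral_of_nonneg_ae (Filter.Eventually.of_forall fun ω => by positivity)
      hsm₂]
    have : ∀ ω, ENNReal.ofReal ((τ₂ ω : ℝ)) = ((τ₂ ω : ℕ) : ℝ≥0∞) := fun ω =>
      ENNReal.ofReal_natCast _
    rw [lintegral_congr this, lint_one μ τ₂ hmeas₂]
    rw [tsum_congr hm₂, ENNReal.tsum_geometric, h1b₁]
    rw [← ENNReal.ofReal_inv_of_pos (by linarith), ENNReal.toReal_ofReal (inv_nonneg.mpr (by linarith))]
  -- generic toReal of the double geometric value
  have hval : ∀ β : ℝ, 0 ≤ β → β < 1 →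
      (((1 : ℝ≥0∞) - ENNReal.ofReal β)⁻¹ * ((1 : ℝ≥0∞) - b₁)⁻¹ * (1 + b₁)).toReal
        = (1 - β)⁻¹ * (1 - β₁)⁻¹ * (1 + β₁) := by
    intro β hβ0 hβlt
    have h1b : (1 : ℝ≥0∞) - ENNReal.ofReal β = ENNReal.ofReal (1 - β) := by
      rw [ENNReal.ofReal_sub _ hβ0, ENNReal.ofReal_one]
    rw [h1b, h1b₁, ENNReal.toReal_mul, ENNReal.toReal_mul, ENNReal.toReal_inv,
      ENNReal.toReal_inv, ENNReal.toReal_ofReal (by linarith), ENNReal.toReal_ofReal (by linarith),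
      ENNReal.toReal_add ENNReal.one_ne_top ENNReal.ofReal_ne_top, ENNReal.toReal_one,
      ENNReal.toReal_ofReal hβ₁.le]
  -- second moments
  have hsq : ∀ (τ : Ω → ℕ), Measurable τ → (∀ n : ℕ, μ {ω | n < τ ω} = b₁ ^ n) →
      ∫ ω, (τ ω : ℝ) ^ 2 ∂μ = (1 - β₁)⁻¹ * (1 - β₁)⁻¹ * (1 + β₁) := by
    intro τ hτ hmτ
    have hmrτ : Measurable (fun ω => (τ ω : ℝ)) := measurable_from_top.comp hτ
    have hsm2 : AEStronglyMeasurable (fun ω => (τ ω : ℝ) ^ 2) μ :=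
      (hmrτ.pow_const 2).aestronglyMeasurable
    rw [integral_eq_lintegral_of_nonneg_ae (Filter.Eventually.of_forall fun ω => by positivity)
      hsm2]
    have : ∀ ω, ENNReal.ofReal ((τ ω : ℝ) ^ 2) = ((τ ω : ℕ) : ℝ≥0∞) * ((τ ω : ℕ) : ℝ≥0∞) := by
      intro ω
      rw [show ((τ ω : ℝ)) ^ 2 = ((τ ω ^ 2 : ℕ) : ℝ) by push_cast; ring,
        ENNReal.ofReal_natCast]
      push_cast
      ring
    rw [lintegral_congr this, lint_two μ τ τ hτ hτ]
    have hterm : ∀ p : ℕ × ℕ, μ {ω | p.1 < τ ω ∧ p.2 < τ ω}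
        = b₁ ^ min p.1 p.2 * b₁ ^ (max p.1 p.2 - min p.1 p.2) := by
      intro p
      have hset : {ω | p.1 < τ ω ∧ p.2 < τ ω} = {ω | max p.1 p.2 < τ ω} := by
        ext ω; simp [max_lt_iff]
      rw [hset, hmτ, ← pow_add]
      congr 1
      omega
    rw [tsum_congr hterm, double_geo b₁ b₁]
    exact hval β₁ hβ₁.le hβ₁'
  have hIsq₁ := hsq τ₁ hmeas₁ hm₁
  have hIsq₂ := hsq τ₂ hmeas₂ hm₂
  -- cross moment
  have hIxy : ∫ ω, (τ₁ ω : ℝ) * (τ₂ ω : ℝ) ∂μ = (1 - β₂)⁻¹ * (1 - β₁)⁻¹ * (1 + β₁) := by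
    rw [integral_eq_lintegral_of_nonneg_ae (Filter.Eventually.of_forall fun ω => by positivity)
      (show AEStronglyMeasurable (fun ω => (τ₁ ω : ℝ) * (τ₂ ω : ℝ)) μ from (hmr₁.mul hmr₂).aestronglyMeasurable)]
    have : ∀ ω, ENNReal.ofReal ((τ₁ ω : ℝ) * (τ₂ ω : ℝ))
        = ((τ₁ ω : ℕ) : ℝ≥0∞) * ((τ₂ ω : ℕ) : ℝ≥0∞) := by
      intro ω
      rw [show ((τ₁ ω : ℝ)) * (τ₂ ω : ℝ) = ((τ₁ ω * τ₂ ω : ℕ) : ℝ) by push_cast; ring,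
        ENNReal.ofReal_natCast]
      push_cast
      ring
    rw [lintegral_congr this, lint_two μ τ₁ τ₂ hmeas₁ hmeas₂]
    have hterm : ∀ p : ℕ × ℕ, μ {ω | p.1 < τ₁ ω ∧ p.2 < τ₂ ω}
        = b₂ ^ min p.1 p.2 * b₁ ^ (max p.1 p.2 - min p.1 p.2) := by
      intro p
      rw [hsurv p.1 p.2, ENNReal.ofReal_mul (by positivity), ENNReal.ofReal_pow hβ₂0,
        ENNReal.ofReal_pow hβ₁.le]
    rw [tsum_congr hterm, double_geo b₁ b₂]
    exact hval β₂ hβ₂0 hβ₂1'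
  -- final arithmetic
  rw [hI₁, hI₂, hIsq₁, hIsq₂, hIxy]
  have hvar : (1 - β₁)⁻¹ * (1 - β₁)⁻¹ * (1 + β₁) - ((1 - β₁)⁻¹) ^ 2 = β₁ / (1 - β₁) ^ 2 := by
    field_simp
    ring
  rw [hvar, Real.mul_self_sqrt (by positivity)]
  have hβ₁0 : β₁ ≠ 0 := ne_of_gt hβ₁
  field_simp
  ring
end

section
/- For any d ≥ 2 and any (1, β₁, ..., β_d) that is a (d+1)-monotone sequence with β₁ ≠ 0, the quantity (β₂ − β₁²)/(β₁(1 − β₂)) is bounded below by −1/d, and the bound is attained at (β₀,...,β_d) = (1, 1/d, 0, ..., 0). -/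
open Finset

noncomputable def Sd (β : ℕ → ℝ) (j k : ℕ) : ℝ :=
  ∑ i ∈ Finset.range (j + 1), (-1 : ℝ) ^ i * (Nat.choose j i : ℝ) * β (k + i)

lemma Sd_succ (β : ℕ → ℝ) (j k : ℕ) : Sd β (j+1) k = Sd β j k - Sd β j (k+1) := by
  have e2 : ∀ i : ℕ, (-1:ℝ)^(i+1) * (Nat.choose (j+1) (i+1) : ℝ) * β (k+(i+1))
      = (-1:ℝ)^(i+1) * (Nat.choose j (i+1) : ℝ) * β (k+(i+1))
        - (-1:ℝ)^i * (Nat.choose j i : ℝ) * β ((k+1)+i) := by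
    intro i
    have h : ((Nat.choose (j+1) (i+1) : ℕ) : ℝ) = (Nat.choose j i : ℝ) + (Nat.choose j (i+1) : ℝ) := by
      rw [Nat.choose_succ_succ]; push_cast; ring
    have hk : k + (i+1) = (k+1) + i := by omega
    rw [h, hk]; ring
  have e1 : Sd β (j+1) k
      = (∑ i ∈ range (j+1), (-1:ℝ)^(i+1) * (Nat.choose (j+1) (i+1) : ℝ) * β (k+(i+1))) + β k := by
    rw [Sd, Finset.sum_range_succ' _ (j+1)]; norm_num
  have e3 : (∑ i ∈ range (j+1), (-1:ℝ)^(i+1) * (Nat.choose j (i+1) : ℝ) * β (k+(i+1)))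
      = Sd β j k - β k := by
    rw [Finset.sum_range_succ, Nat.choose_succ_self]
    rw [Sd, Finset.sum_range_succ' _ j]
    norm_num
  rw [e1, Finset.sum_congr rfl (fun i _ => e2 i), Finset.sum_sub_distrib, e3]
  have e4 : Sd β j (k+1) = ∑ i ∈ range (j+1), (-1:ℝ)^i * (Nat.choose j i : ℝ) * β ((k+1)+i) := rfl
  rw [e4]; ring

noncomputable def Td (β : ℕ → ℝ) (n k : ℕ) : ℝ :=
  ∑ j ∈ Finset.range (n+1), (Nat.choose n j : ℝ) * Sd β j (k + (n - j))

lemma Td_eq (β : ℕ → ℝ) (n k : ℕ) : Td β n k = β k := by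
  induction n generalizing k with
  | zero => simp [Td, Sd]
  | succ n ih =>
    have hQ : ∑ j ∈ range (n+1), (Nat.choose n (j+1) : ℝ) * Sd β (j+1) (k + (n - j))
        = β (k+1) - β (k + (n+1)) := by
      rw [Finset.sum_range_succ, Nat.choose_succ_self]
      have : ∑ j ∈ range n, (Nat.choose n (j+1) : ℝ) * Sd β (j+1) (k + (n - j))
          = ∑ j ∈ range n, (Nat.choose n (j+1) : ℝ) * Sd β (j+1) ((k+1) + (n - (j+1))) := by
        refine Finset.sum_congr rfl fun j hj => ?_
        rw [Finset.mem_range] at hj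
        congr 2
        omega
      rw [this]
      have h2 : β (k+1) = Td β n (k+1) := (ih (k+1)).symm
      rw [h2, Td, Finset.sum_range_succ' _ n]
      have h0 : (Nat.choose n 0 : ℝ) * Sd β 0 (k + 1 + (n - 0)) = β (k + (n+1)) := by
        simp only [Nat.choose_zero_right, Nat.cast_one, one_mul, Sd]
        rw [Finset.sum_range_one]
        norm_num
        congr 1
        omega
      rw [h0]
      ring
    have hP : ∑ j ∈ range (n+1), (Nat.choose n j : ℝ) * Sd β (j+1) (k + (n - j))
        = β k - β (k+1) := by
      have : ∀ j, (Nat.choose n j : ℝ) * Sd β (j+1) (k + (n - j))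
          = (Nat.choose n j : ℝ) * Sd β j (k + (n - j))
            - (Nat.choose n j : ℝ) * Sd β j ((k+1) + (n - j)) := by
        intro j
        rw [Sd_succ]
        have : k + (n-j) + 1 = (k+1) + (n-j) := by omega
        rw [this]; ring
      rw [Finset.sum_congr rfl (fun j _ => this j), Finset.sum_sub_distrib]
      have hA : (∑ j ∈ range (n+1), (Nat.choose n j : ℝ) * Sd β j (k + (n - j))) = β k := ih k
      have hB : (∑ j ∈ range (n+1), (Nat.choose n j : ℝ) * Sd β j ((k+1) + (n - j))) = β (k+1) := ih (k+1)
      rw [hA, hB]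
    have main : Td β (n+1) k
        = (∑ j ∈ range (n+1), ((Nat.choose n j : ℝ) * Sd β (j+1) (k + (n - j))
            + (Nat.choose n (j+1) : ℝ) * Sd β (j+1) (k + (n - j)))) + β (k + (n+1)) := by
      rw [Td, Finset.sum_range_succ' _ (n+1)]
      have h0 : (Nat.choose (n+1) 0 : ℝ) * Sd β 0 (k + (n + 1 - 0)) = β (k + (n+1)) := by
        simp only [Nat.choose_zero_right, Nat.cast_one, one_mul, Sd]
        rw [Finset.sum_range_one]
        norm_num
      rw [h0]
      congr 1
      refine Finset.sum_congr rfl fun j hj => ?_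
      have hidx : k + (n + 1 - (j+1)) = k + (n - j) := by omega
      rw [hidx, Nat.choose_succ_succ]
      push_cast
      ring
    rw [main, Finset.sum_add_distrib, hP, hQ]
    ring

lemma nat_id1 (d j : ℕ) (hd : 1 ≤ d) : (d - j) * Nat.choose d j = d * Nat.choose (d-1) j := by
  have h1 := Nat.add_one_mul_choose_eq (d-1) j
  have h2 := Nat.choose_succ_right_eq d j
  have hs : d - 1 + 1 = d := by omega
  rw [hs] at h1
  rw [h1, h2, Nat.mul_comm]


lemma part1 (d : ℕ) (hd : 2 ≤ d) (β : ℕ → ℝ) (hβ0 : β 0 = 1)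
    (hmono : ∀ k j : ℕ, k + j ≤ d → 0 ≤ Sd β j k) (hne : β 1 ≠ 0) :
    -(1 / d : ℝ) ≤ (β 2 - β 1 ^ 2) / (β 1 * (1 - β 2)) := by
  have hdn : 0 < d := by omega
  have hd0 : (0:ℝ) < d := by exact_mod_cast hdn
  set c : ℕ → ℝ := fun j => Sd β j (d - j) with hc_def
  have hc : ∀ j ∈ range (d+1), 0 ≤ c j := by
    intro j hj
    rw [mem_range] at hj
    exact hmono (d - j) j (by omega)
  -- generic moment identity
  have moment : ∀ k : ℕ, k ≤ 2 →
      ∑ j ∈ range (d+1), (Nat.choose (d-k) j : ℝ) * c j = β k := by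
    intro k hk
    have ha : ∑ j ∈ range (d-k+1), (Nat.choose (d-k) j : ℝ) * Sd β j (k + (d-k-j))
        = ∑ j ∈ range (d-k+1), (Nat.choose (d-k) j : ℝ) * c j := by
      refine Finset.sum_congr rfl fun j hj => ?_
      rw [mem_range] at hj
      have : k + (d - k - j) = d - j := by omega
      rw [this]
    have hb : ∑ j ∈ range (d-k+1), (Nat.choose (d-k) j : ℝ) * c j
        = ∑ j ∈ range (d+1), (Nat.choose (d-k) j : ℝ) * c j := by
      refine Finset.sum_subset (Finset.range_subset_range.mpr (by omega)) ?_
      intro j hj1 hj2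
      rw [mem_range] at hj1 hj2
      rw [Nat.choose_eq_zero_of_lt (show d - k < j by omega)]
      simp
    rw [← hb, ← ha]
    exact Td_eq β (d-k) k
  have B0 : ∑ j ∈ range (d+1), (Nat.choose d j : ℝ) * c j = 1 := by
    have h := moment 0 (by omega)
    simpa [hβ0] using h
  have B1 : ∑ j ∈ range (d+1), (Nat.choose (d-1) j : ℝ) * c j = β 1 := moment 1 (by omega)
  have B2 : ∑ j ∈ range (d+1), (Nat.choose (d-2) j : ℝ) * c j = β 2 := moment 2 (by omega)
  set q : ℕ → ℝ := fun j => (Nat.choose d j : ℝ) * c j with hq_def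
  set a : ℕ → ℝ := fun j => ((d - j : ℕ) : ℝ) with ha_def
  have hq : ∀ j ∈ range (d+1), 0 ≤ q j := fun j hj => mul_nonneg (by positivity) (hc j hj)
  have hd1 : (1:ℕ) ≤ d := by omega
  have hqa : ∑ j ∈ range (d+1), q j * a j = d * β 1 := by
    rw [← B1, Finset.mul_sum]
    refine Finset.sum_congr rfl fun j hj => ?_
    have : q j * a j = (((d - j) * Nat.choose d j : ℕ) : ℝ) * c j := by
      simp only [hq_def, ha_def]; push_cast; ring
    rw [this, nat_id1 d j hd1]
    push_cast
    ring
  have hqa2 : ∑ j ∈ range (d+1), q j * a j ^ 2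
      = (d:ℝ) * ((d:ℝ) - 1) * β 2 + d * β 1 := by
    rw [← B1, ← B2, Finset.mul_sum, Finset.mul_sum, ← Finset.sum_add_distrib]
    refine Finset.sum_congr rfl fun j hj => ?_
    have hnat2 : (d - 1 - j) * Nat.choose (d-1) j = (d-1) * Nat.choose (d-2) j := by
      have := nat_id1 (d-1) j (by omega)
      have e : d - 1 - 1 = d - 2 := by omega
      rwa [e] at this
    have hsq : ∀ m : ℕ, m * m = (m - 1) * m + m := by
      intro m
      cases m with
      | zero => rfl
      | succ n => simp [Nat.succ_sub_one]; ring
    have hmm : (d - j) * (d - j) * Nat.choose d j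
        = d * (d-1) * Nat.choose (d-2) j + d * Nat.choose (d-1) j := by
      have e1 : (d - j) * (d - j) * Nat.choose d j
          = (d - j - 1) * ((d - j) * Nat.choose d j) + (d - j) * Nat.choose d j := by
        rw [hsq (d-j)]; ring
      rw [e1, nat_id1 d j hd1]
      have e2 : d - j - 1 = d - 1 - j := by omega
      rw [e2, Nat.mul_left_comm, hnat2]
      ring
    have : q j * a j ^ 2 = (((d - j) * (d - j) * Nat.choose d j : ℕ) : ℝ) * c j := by
      simp only [hq_def, ha_def]; push_cast; ring
    rw [this, hmm]
    push_cast [Nat.cast_sub hd1, Nat.cast_sub (show 2 ≤ d from hd)]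
    ring
  have key : ((d:ℝ) * β 1) ^ 2 ≤ (d:ℝ) * ((d:ℝ) - 1) * β 2 + d * β 1 := by
    have cs := Finset.sum_mul_sq_le_sq_mul_sq (range (d+1))
      (fun j => Real.sqrt (q j)) (fun j => Real.sqrt (q j) * a j)
    have e1 : ∑ j ∈ range (d+1), Real.sqrt (q j) * (Real.sqrt (q j) * a j)
        = ∑ j ∈ range (d+1), q j * a j := by
      refine Finset.sum_congr rfl fun j hj => ?_
      rw [← mul_assoc, Real.mul_self_sqrt (hq j hj)]
    have e2 : ∑ j ∈ range (d+1), Real.sqrt (q j) ^ 2 = ∑ j ∈ range (d+1), q j := by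
      refine Finset.sum_congr rfl fun j hj => ?_
      rw [Real.sq_sqrt (hq j hj)]
    have e3 : ∑ j ∈ range (d+1), (Real.sqrt (q j) * a j) ^ 2
        = ∑ j ∈ range (d+1), q j * a j ^ 2 := by
      refine Finset.sum_congr rfl fun j hj => ?_
      rw [mul_pow, Real.sq_sqrt (hq j hj)]
    rw [e1, e2, e3, hqa, hqa2, B0, one_mul] at cs
    exact cs
  have hb1 : 0 ≤ β 1 := by
    have := hmono 1 0 (by omega)
    simpa [Sd] using this
  have hb1' : β 1 ≤ 1 := by
    have h := hmono 0 1 (by omega)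
    rw [Sd, Finset.sum_range_succ, Finset.sum_range_one] at h
    simp at h
    rw [hβ0] at h
    linarith
  have hb2 : 0 ≤ β 2 := by
    have := hmono 2 0 (by omega)
    simpa [Sd] using this
  have hb21 : β 2 ≤ β 1 := by
    have h := hmono 1 1 (by omega)
    rw [Sd, Finset.sum_range_succ, Finset.sum_range_one] at h
    simp at h
    linarith
  have hb1pos : 0 < β 1 := lt_of_le_of_ne hb1 (Ne.symm hne)
  by_cases h2 : β 2 = 1
  · have hz : β 1 * (1 - β 2) = 0 := by rw [h2]; ring
    rw [hz, div_zero]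
    have : 0 ≤ 1 / (d:ℝ) := by positivity
    linarith
  · have hlt : β 2 < 1 := lt_of_le_of_ne (le_trans hb21 hb1') h2
    have hden : 0 < β 1 * (1 - β 2) := mul_pos hb1pos (by linarith)
    have hrw : -(1 / (d:ℝ)) = (-1) / d := by ring
    rw [hrw, div_le_div_iff₀ hd0 hden]
    have h1 : 0 ≤ (d:ℝ) * (β 2 * (1 - β 1)) :=
      mul_nonneg hd0.le (mul_nonneg hb2 (by linarith))
    nlinarith [key, h1, hd0]

lemma part2 (d : ℕ) (hd : 2 ≤ d) :
    (∃ β : ℕ → ℝ, β 0 = 1 ∧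
      (∀ k j : ℕ, k + j ≤ d →
        0 ≤ ∑ i ∈ Finset.range (j + 1),
          (-1 : ℝ) ^ i * (Nat.choose j i : ℝ) * β (k + i)) ∧
      β 1 = 1 / d ∧ (∀ k : ℕ, 2 ≤ k → k ≤ d → β k = 0) ∧
      (β 2 - β 1 ^ 2) / (β 1 * (1 - β 2)) = -(1 / d : ℝ)) := by
  have hdn : 0 < d := by omega
  have hd0 : (0:ℝ) < d := by exact_mod_cast hdn
  refine ⟨fun k => if k = 0 then 1 else if k = 1 then 1 / (d:ℝ) else 0, by norm_num, ?_, by norm_num, ?_, ?_⟩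
  · intro k j hkj
    set β : ℕ → ℝ := fun k => if k = 0 then 1 else if k = 1 then 1 / (d:ℝ) else 0 with hβ
    match k with
    | 0 =>
      match j with
      | 0 => simp [hβ]
      | j + 1 =>
        have hsub : ∑ i ∈ range (j + 1 + 1), (-1:ℝ)^i * (Nat.choose (j+1) i : ℝ) * β (0 + i)
            = ∑ i ∈ range 2, (-1:ℝ)^i * (Nat.choose (j+1) i : ℝ) * β (0 + i) := by
          refine (Finset.sum_subset (Finset.range_subset_range.mpr (by omega)) ?_).symm
          intro i hi1 hi2
          rw [mem_range] at hi1 hi2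
          have : β (0 + i) = 0 := by
            simp only [hβ]
            split_ifs with h1 h2 <;> [omega; omega; rfl]
          rw [this, mul_zero]
        rw [hsub]
        rw [Finset.sum_range_succ, Finset.sum_range_one]
        simp only [hβ]
        norm_num
        have hjd : ((j:ℝ) + 1) ≤ d := by exact_mod_cast (show j + 1 ≤ d by omega)
        have hinv : (0:ℝ) ≤ (d:ℝ)⁻¹ := by positivity
        have e : (d:ℝ) * (d:ℝ)⁻¹ = 1 := mul_inv_cancel₀ hd0.ne'
        nlinarith [mul_le_mul_of_nonneg_right hjd hinv]
    | 1 =>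
      have hsub : ∑ i ∈ range (j + 1), (-1:ℝ)^i * (Nat.choose j i : ℝ) * β (1 + i)
          = ∑ i ∈ range 1, (-1:ℝ)^i * (Nat.choose j i : ℝ) * β (1 + i) := by
        refine (Finset.sum_subset (Finset.range_subset_range.mpr (by omega)) ?_).symm
        intro i hi1 hi2
        rw [mem_range] at hi1 hi2
        have : β (1 + i) = 0 := by
          simp only [hβ]
          split_ifs with h1 h2 <;> [omega; omega; rfl]
        rw [this, mul_zero]
      rw [hsub, Finset.sum_range_one]
      have : (0:ℝ) ≤ (d:ℝ)⁻¹ := by positivity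
      simpa [hβ] using this
    | (k + 2) =>
      have : ∀ i ∈ range (j+1), (-1:ℝ)^i * (Nat.choose j i : ℝ) * β (k + 2 + i) = 0 := by
        intro i hi
        have : β (k + 2 + i) = 0 := by
          simp only [hβ]
          split_ifs with h1 h2 <;> [omega; omega; rfl]
        rw [this, mul_zero]
      rw [Finset.sum_congr rfl this]
      simp
  · intro k hk2 hkd
    show (if k = 0 then (1:ℝ) else if k = 1 then 1 / (d:ℝ) else 0) = 0
    split_ifs with h1 h2 <;> [omega; omega; rfl]
  · norm_num
    field_simp

/-- For any `d ≥ 2` and any `(d+1)`-monotone sequence `(1, β₁, …, β_d)` with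
`β₁ ≠ 0`, the correlation quantity `(β₂ - β₁²)/(β₁(1 - β₂))` is bounded below by
`-1/d`, and the bound is attained at `(1, 1/d, 0, …, 0)`. -/
theorem exchangeable_wide_geometric_correlation_lower_bound
    (d : ℕ) (hd : 2 ≤ d) :
    (∀ β : ℕ → ℝ, β 0 = 1 →
      (∀ k j : ℕ, k + j ≤ d →
        0 ≤ ∑ i ∈ Finset.range (j + 1),
          (-1 : ℝ) ^ i * (Nat.choose j i : ℝ) * β (k + i)) →
      β 1 ≠ 0 →
      -(1 / d : ℝ) ≤ (β 2 - β 1 ^ 2) / (β 1 * (1 - β 2))) ∧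
    (∃ β : ℕ → ℝ, β 0 = 1 ∧
      (∀ k j : ℕ, k + j ≤ d →
        0 ≤ ∑ i ∈ Finset.range (j + 1),
          (-1 : ℝ) ^ i * (Nat.choose j i : ℝ) * β (k + i)) ∧
      β 1 = 1 / d ∧ (∀ k : ℕ, 2 ≤ k → k ≤ d → β k = 0) ∧
      (β 2 - β 1 ^ 2) / (β 1 * (1 - β 2)) = -(1 / d : ℝ)) :=
  ⟨fun β h0 hm hne => part1 d hd β h0 hm hne, part2 d hd⟩
end

section
/- Every bivariate wide-sense geometric distribution with non-negatively correlated components is narrow-sense geometric: if P(τ₁>i, τ₂>j) = (p̃_∅ + p̃_{{2}})^{i−j} p̃_∅^j for i ≥ j and = (p̃_∅ + p̃_{{1}})^{j−i} p̃_∅^i for i < j, with Σ_{I⊆{1,2}} p̃_I = 1, p̃_∅ + p̃_{{1}} < 1, p̃_∅ + p̃_{{2}} < 1, p̃_∅ > 0, and p̃_∅ ≥ (p̃_∅ + p̃_{{1}})(p̃_∅ + p̃_{{2}}), then setting p₁ := p̃_∅/(p̃_∅+p̃_{{1}}), p₂ := p̃_∅/(p̃_∅+p̃_{{2}}), p₁₂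 := (p̃_∅+p̃_{{1}})(p̃_∅+p̃_{{2}})/p̃_∅, one has p₁, p₂, p₁₂ ∈ (0,1], p₁p₁₂ < 1, p₂p₁₂ < 1, and P(τ₁>i, τ₂>j) = p₁^i p₂^j p₁₂^{max(i,j)} for all i, j ∈ ℕ₀. -/
/-- Every bivariate wide-sense geometric distribution with non-negatively correlated
components is narrow-sense geometric. -/
theorem bivariate_wide_nonneg_corr_is_narrow
    (q0 q1 q2 q12 : ℝ)
    (hq0 : 0 ≤ q0) (hq1 : 0 ≤ q1) (hq2 : 0 ≤ q2) (hq12 : 0 ≤ q12)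
    (hsum : q0 + q1 + q2 + q12 = 1)
    (hfin1 : q0 + q1 < 1) (hfin2 : q0 + q2 < 1)
    (hq0pos : 0 < q0)
    (hcov : (q0 + q1) * (q0 + q2) ≤ q0)
    (F : ℕ → ℕ → ℝ)
    (hF : ∀ i j : ℕ, F i j =
      if j ≤ i then (q0 + q2) ^ (i - j) * q0 ^ j else (q0 + q1) ^ (j - i) * q0 ^ i)
    (p₁ p₂ p₁₂ : ℝ)
    (hp₁ : p₁ = q0 / (q0 + q1)) (hp₂ : p₂ = q0 / (q0 + q2))
    (hp₁₂ : p₁₂ = (q0 + q1) * (q0 + q2) / q0) :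
    (0 < p₁ ∧ p₁ ≤ 1) ∧ (0 < p₂ ∧ p₂ ≤ 1) ∧ (0 < p₁₂ ∧ p₁₂ ≤ 1) ∧
    p₁ * p₁₂ < 1 ∧ p₂ * p₁₂ < 1 ∧
    ∀ i j : ℕ, F i j = p₁ ^ i * p₂ ^ j * p₁₂ ^ max i j := by
  have ha : 0 < q0 + q1 := by linarith
  have hb : 0 < q0 + q2 := by linarith
  have hp1pos : 0 < p₁ := by rw [hp₁]; positivity
  have hp2pos : 0 < p₂ := by rw [hp₂]; positivity
  have hp12pos : 0 < p₁₂ := by rw [hp₁₂]; positivity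
  have hp1le : p₁ ≤ 1 := by rw [hp₁, div_le_one ha]; linarith
  have hp2le : p₂ ≤ 1 := by rw [hp₂, div_le_one hb]; linarith
  have hp12le : p₁₂ ≤ 1 := by rw [hp₁₂, div_le_one hq0pos]; linarith
  have h1 : p₁ * p₁₂ = q0 + q2 := by
    rw [hp₁, hp₁₂]; field_simp
  have h2 : p₂ * p₁₂ = q0 + q1 := by
    rw [hp₂, hp₁₂]; field_simp
  refine ⟨⟨hp1pos, hp1le⟩, ⟨hp2pos, hp2le⟩, ⟨hp12pos, hp12le⟩, by rw [h1]; exact hfin2,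
    by rw [h2]; exact hfin1, ?_⟩
  intro i j
  rw [hF]
  split
  · next h =>
    rw [max_eq_left h]
    have : p₁ ^ i * p₂ ^ j * p₁₂ ^ i = (p₁ * p₁₂) ^ i * p₂ ^ j := by ring
    rw [this, h1, hp₂, pow_sub₀ _ hb.ne' h, div_pow]
    field_simp
  · next h =>
    have h' : i ≤ j := le_of_not_ge h
    rw [max_eq_right h']
    have : p₁ ^ i * p₂ ^ j * p₁₂ ^ j = (p₂ * p₁₂) ^ j * p₁ ^ i := by ring
    rw [this, h2, hp₁, pow_sub₀ _ ha.ne' h', div_pow]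
    field_simp
end
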